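/- arXiv:math/0311319 — 8 statements merged into one kernel-verified Lean document; each statement's English description precedes it below -/
import Mathlib

section
/- Let p be a prime, a a positive integer, and n a positive integer not divisible by p. For every monic irreducible polynomial h₁ ∈ (ZMod p)[X] dividing X^n − 1, there exists a unique monic polynomial h ∈ (ZMod p^a)[X] such that h divides X^n − 1 in (ZMod p^a)[X] and the image of h under the coefficientwise reduction map (ZMod p^a)[X] → (ZMod p)[X] equals h₁; moreover this h is irreducible in (ZMod p^a)[X]. -/
open Polynomial

section Aux

variable {R : Type*} [CommRing R] {k : Type*} [Field k] (π : R →+* k) (t : R)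

lemma aux_Cdvd (hker : ∀ x : R, π x = 0 ↔ t ∣ x) {q : R[X]} (hq : q.map π = 0) :
    C t ∣ q := by
  rw [Polynomial.C_dvd_iff_dvd_coeff]
  intro i
  rw [← hker]
  have := congrArg (fun r : k[X] => r.coeff i) hq
  simpa [Polynomial.coeff_map] using this

lemma aux_unit (hsurj : Function.Surjective π) (hker : ∀ x : R, π x = 0 ↔ t ∣ x)
    (hnil : IsNilpotent t) {x : R} (hx : π x ≠ 0) : IsUnit x := by
  obtain ⟨y, hy⟩ := hsurj (π x)⁻¹
  have h0 : π (x * y - 1) = 0 := by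
    simp [map_mul, hy, mul_inv_cancel₀ hx]
  obtain ⟨e, he⟩ := (hker _).mp h0
  have hxy : x * y = 1 + t * e := by linear_combination he
  obtain ⟨m, hm⟩ := hnil
  have hu : IsUnit (x * y) := by
    rw [hxy]
    exact IsNilpotent.isUnit_one_add ⟨m, by rw [mul_pow, hm, zero_mul]⟩
  exact isUnit_of_mul_isUnit_left hu

lemma aux_polyunit (hsurj : Function.Surjective π) (hker : ∀ x : R, π x = 0 ↔ t ∣ x)
    (hnil : IsNilpotent t) {b : R[X]} (hb : IsUnit (b.map π)) : IsUnit b := by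
  obtain ⟨s, hs_unit, hsC⟩ := Polynomial.isUnit_iff.mp hb
  obtain ⟨s', hs'⟩ := hsurj s
  have h0 : (b - C s').map π = 0 := by
    rw [Polynomial.map_sub, map_C, hs', hsC, sub_self]
  obtain ⟨w, hw⟩ := aux_Cdvd π t hker h0
  have hb' : b = C s' + C t * w := by linear_combination hw
  have hs'u : IsUnit (C s' : R[X]) := by
    refine Polynomial.isUnit_C.mpr (aux_unit π t hsurj hker hnil ?_)
    rw [hs']
    exact hs_unit.ne_zero
  obtain ⟨m, hm⟩ := hnil
  have hnilCt : IsNilpotent (C t * w) := ⟨m, by rw [mul_pow, ← C_pow, hm, C_0, zero_mul]⟩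
  rw [hb']
  exact hnilCt.isUnit_add_left_of_commute hs'u (Commute.all _ _)

lemma aux_coprime (hsurj : Function.Surjective π) (hker : ∀ x : R, π x = 0 ↔ t ∣ x)
    (hnil : IsNilpotent t) {h g : R[X]} (hco : IsCoprime (h.map π) (g.map π)) :
    IsCoprime h g := by
  obtain ⟨u, v, huv⟩ := hco
  obtain ⟨U, hU⟩ := Polynomial.map_surjective π hsurj u
  obtain ⟨V, hV⟩ := Polynomial.map_surjective π hsurj v
  have h0 : (U * h + V * g - 1).map π = 0 := by
    rw [Polynomial.map_sub, Polynomial.map_add, Polynomial.map_mul, Polynomial.map_mul,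
      Polynomial.map_one, hU, hV, huv, sub_self]
  obtain ⟨e, he⟩ := aux_Cdvd π t hker h0
  obtain ⟨m, hm⟩ := hnil
  have hu : IsUnit (1 + C t * e) :=
    IsNilpotent.isUnit_one_add ⟨m, by rw [mul_pow, ← C_pow, hm, C_0, zero_mul]⟩
  obtain ⟨z, hz⟩ := hu.exists_right_inv
  refine ⟨z * U, z * V, ?_⟩
  have heq : U * h + V * g = 1 + C t * e := by linear_combination he
  linear_combination z * heq + hz

lemma aux_exists (hsurj : Function.Surjective π) (hker : ∀ x : R, π x = 0 ↔ t ∣ x)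
    {a : ℕ} (ha : 0 < a) (ht : t ^ a = 0)
    {f : R[X]} {h₁ g₁ : k[X]} (h₁m : h₁.Monic)
    (hco : IsCoprime h₁ g₁) (hmap : f.map π = h₁ * g₁) :
    ∃ h g : R[X], h.Monic ∧ h.degree = h₁.degree ∧ h.map π = h₁ ∧ g.map π = g₁ ∧
      f = h * g := by
  have key : ∀ j : ℕ, 1 ≤ j → ∃ h g : R[X], h.Monic ∧ h.degree = h₁.degree ∧
      h.map π = h₁ ∧ g.map π = g₁ ∧ C t ^ j ∣ (f - h * g) := by
    intro j hj
    induction j, hj using Nat.le_induction with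
    | base =>
      obtain ⟨H₀, hH₀⟩ := Polynomial.map_surjective π hsurj h₁
      obtain ⟨H, hHmap, hHdeg, hHmonic⟩ :=
        lifts_and_degree_eq_and_monic ((mem_lifts h₁).mpr ⟨H₀, hH₀⟩) h₁m
      obtain ⟨G, hG⟩ := Polynomial.map_surjective π hsurj g₁
      refine ⟨H, G, hHmonic, hHdeg, hHmap, hG, ?_⟩
      rw [pow_one]
      exact aux_Cdvd π t hker (by
        rw [Polynomial.map_sub, Polynomial.map_mul, hHmap, hG, hmap, sub_self])
    | succ j hj ih =>
      obtain ⟨h, g, hm, hdeg, hhm, hgm, hdvd⟩ := ih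
      obtain ⟨c, hc⟩ := hdvd
      obtain ⟨u, v, huv⟩ := hco
      set cb := c.map π with hcb
      set r := (cb * v) %ₘ h₁ with hrdef
      set q := (cb * v) /ₘ h₁ with hqdef
      have hrq : r + h₁ * q = cb * v := modByMonic_add_div _ h₁
      have hident : r * g₁ + (cb * u + q * g₁) * h₁ = cb := by
        linear_combination g₁ * hrq + cb * huv
      obtain ⟨r₀, hr₀⟩ := Polynomial.map_surjective π hsurj r
      obtain ⟨δh, hδh, hδhdeg⟩ := mem_lifts_and_degree_eq ((mem_lifts r).mpr ⟨r₀, hr₀⟩)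
      obtain ⟨δg, hδg⟩ := Polynomial.map_surjective π hsurj (cb * u + q * g₁)
      have hπt : π t = 0 := (hker t).mpr dvd_rfl
      have hNk : Nontrivial R := π.domain_nontrivial
      have hdegδ : (C t ^ j * δh).degree < h.degree := by
        calc (C t ^ j * δh).degree ≤ (C t ^ j : R[X]).degree + δh.degree :=
              degree_mul_le _ _
          _ ≤ 0 + δh.degree := by
              gcongr
              rw [← C_pow]
              exact degree_C_le
          _ = r.degree := by rw [zero_add, hδhdeg]
          _ < h₁.degree := degree_modByMonic_lt _ h₁m
          _ = h.degree := hdeg.symm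
      refine ⟨h + C t ^ j * δh, g + C t ^ j * δg, hm.add_of_left hdegδ, ?_, ?_, ?_, ?_⟩
      · rw [degree_add_eq_left_of_degree_lt hdegδ]; exact hdeg
      · rw [Polynomial.map_add, Polynomial.map_mul, Polynomial.map_pow, map_C, hπt, C_0,
          zero_pow (by omega : j ≠ 0), zero_mul, add_zero, hhm]
      · rw [Polynomial.map_add, Polynomial.map_mul, Polynomial.map_pow, map_C, hπt, C_0,
          zero_pow (by omega : j ≠ 0), zero_mul, add_zero, hgm]
      · have hw : f - (h + C t ^ j * δh) * (g + C t ^ j * δg)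
            = C t ^ j * (c - (δh * g + δg * h + C t ^ j * (δh * δg))) := by
          linear_combination hc
        rw [hw, pow_succ]
        refine mul_dvd_mul_left _ (aux_Cdvd π t hker ?_)
        rw [Polynomial.map_sub, Polynomial.map_add, Polynomial.map_add, Polynomial.map_mul,
          Polynomial.map_mul, Polynomial.map_mul, Polynomial.map_mul, Polynomial.map_pow,
          map_C, hπt, C_0, zero_pow (by omega : j ≠ 0), zero_mul, hhm, hgm, hδh, hδg, ← hcb]
        linear_combination -hident
  obtain ⟨h, g, hm, hdeg, hh, hg, hdvd⟩ := key a ha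
  have h0 : (C t ^ a : R[X]) = 0 := by rw [← C_pow, ht, C_0]
  rw [h0, zero_dvd_iff, sub_eq_zero] at hdvd
  exact ⟨h, g, hm, hdeg, hh, hg, hdvd⟩

lemma aux_unique (hsurj : Function.Surjective π) (hker : ∀ x : R, π x = 0 ↔ t ∣ x)
    (hnil : IsNilpotent t) {f : R[X]}
    {h₁ g₁ : k[X]} (hco : IsCoprime h₁ g₁) (hmap : f.map π = h₁ * g₁)
    {h h' : R[X]} (hm : h.Monic) (hm' : h'.Monic) (hd : h ∣ f) (hd' : h' ∣ f)
    (hhm : h.map π = h₁) (hhm' : h'.map π = h₁) : h = h' := by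
  have hNk : Nontrivial R := π.domain_nontrivial
  have h₁m : h₁.Monic := hhm ▸ hm.map π
  have hfh : f = h * (f /ₘ h) := by
    conv_lhs => rw [← modByMonic_add_div f h]
    rw [(modByMonic_eq_zero_iff_dvd hm).mpr hd, zero_add]
  have hfh' : f = h' * (f /ₘ h') := by
    conv_lhs => rw [← modByMonic_add_div f h']
    rw [(modByMonic_eq_zero_iff_dvd hm').mpr hd', zero_add]
  set g := f /ₘ h
  set g' := f /ₘ h'
  have hgm : g.map π = g₁ := by
    have hh₁ : h₁ ≠ 0 := h₁m.ne_zero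
    have : h₁ * g.map π = h₁ * g₁ := by
      rw [← hmap, hfh, Polynomial.map_mul, hhm]
    exact mul_left_cancel₀ hh₁ this
  have hg'm : g'.map π = g₁ := by
    have hh₁ : h₁ ≠ 0 := h₁m.ne_zero
    have : h₁ * g'.map π = h₁ * g₁ := by
      rw [← hmap, hfh', Polynomial.map_mul, hhm']
    exact mul_left_cancel₀ hh₁ this
  have hcop : IsCoprime h g' := by
    refine aux_coprime π t hsurj hker hnil ?_
    rw [hhm, hg'm]; exact hco
  have hkey : (h - h') * g' = h * (g' - g) := by
    linear_combination hfh' - hfh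
  have hdvd1 : h ∣ (h - h') * g' := ⟨g' - g, hkey⟩
  have hdvd2 : h ∣ h - h' := hcop.dvd_of_dvd_mul_right hdvd1
  have hdegeq : h.degree = h'.degree := by
    rw [← hm.degree_map π, ← hm'.degree_map π, hhm, hhm']
  rcases eq_or_ne h h' with heq | hne
  · exact heq
  have hlt : (h - h').degree < h.degree :=
    degree_sub_lt hdegeq hm.ne_zero (by rw [hm.leadingCoeff, hm'.leadingCoeff])
  obtain ⟨s, hs⟩ := hdvd2
  rcases eq_or_ne s 0 with rfl | hs0
  · rw [mul_zero] at hs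
    exact sub_eq_zero.mp hs
  · exfalso
    have hge : h.degree ≤ (h * s).degree := by
      rw [mul_comm, hm.degree_mul]
      exact le_add_of_nonneg_left (zero_le_degree_iff.mpr hs0)
    rw [← hs] at hge
    exact absurd (lt_of_le_of_lt hge hlt) (lt_irrefl _)

lemma aux_irred (hsurj : Function.Surjective π) (hker : ∀ x : R, π x = 0 ↔ t ∣ x)
    (hnil : IsNilpotent t) {h : R[X]} {h₁ : k[X]} (hhm : h.map π = h₁)
    (h₁irr : Irreducible h₁) : Irreducible h := by
  constructor
  · intro hu
    exact h₁irr.not_isUnit (hhm ▸ hu.map (mapRingHom π))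
  · intro b c hbc
    have hsplit : h₁ = b.map π * c.map π := by
      rw [← hhm, hbc, Polynomial.map_mul]
    rcases h₁irr.isUnit_or_isUnit hsplit with hb | hc
    · exact Or.inl (aux_polyunit π t hsurj hker hnil hb)
    · exact Or.inr (aux_polyunit π t hsurj hker hnil hc)

end Aux

theorem stmt0 (p : ℕ) [Fact p.Prime] (a n : ℕ) (ha : 0 < a) (hn : 0 < n) (hpn : ¬ p ∣ n)
    (h₁ : Polynomial (ZMod p)) (h₁monic : h₁.Monic) (h₁irr : Irreducible h₁)
    (h₁dvd : h₁ ∣ (X ^ n - 1 : Polynomial (ZMod p))) :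
    (∃! h : Polynomial (ZMod (p ^ a)), h.Monic ∧ h ∣ (X ^ n - 1) ∧
        h.map (ZMod.castHom (dvd_pow_self p ha.ne') (ZMod p)) = h₁) ∧
    (∀ h : Polynomial (ZMod (p ^ a)), h.Monic → h ∣ (X ^ n - 1) →
        h.map (ZMod.castHom (dvd_pow_self p ha.ne') (ZMod p)) = h₁ → Irreducible h) := by
  have hp : p.Prime := Fact.out
  haveI : NeZero (p ^ a) := ⟨pow_ne_zero a hp.ne_zero⟩
  set π := ZMod.castHom (dvd_pow_self p ha.ne') (ZMod p) with hπdef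
  set t : ZMod (p ^ a) := (p : ZMod (p ^ a)) with htdef
  have hsurj : Function.Surjective π := ZMod.ringHom_surjective π
  have hker : ∀ x : ZMod (p ^ a), π x = 0 ↔ t ∣ x := by
    intro x
    constructor
    · intro hx
      have hv : ((x.val : ℕ) : ZMod (p ^ a)) = x := ZMod.natCast_rightInverse x
      have : ((x.val : ℕ) : ZMod p) = 0 := by
        rw [← map_natCast π, hv, hx]
      obtain ⟨m, hmm⟩ := (ZMod.natCast_eq_zero_iff _ _).mp this
      exact ⟨(m : ZMod (p ^ a)), by rw [← hv, hmm, Nat.cast_mul]⟩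
    · rintro ⟨y, rfl⟩
      have h0 : π t = 0 := by rw [htdef, map_natCast, ZMod.natCast_self]
      rw [map_mul, h0, zero_mul]
  have ht : t ^ a = 0 := by
    have := ZMod.natCast_self (p ^ a)
    rwa [Nat.cast_pow] at this
  have hnil : IsNilpotent t := ⟨a, ht⟩
  obtain ⟨g₁, hg₁⟩ := h₁dvd
  have hnz : ((n : ZMod p)) ≠ 0 := by
    rwa [Ne, ZMod.natCast_eq_zero_iff]
  have hsep : (h₁ * g₁).Separable := by
    rw [← hg₁]
    have := separable_X_pow_sub_C (1 : ZMod p) hnz one_ne_zero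
    rwa [map_one] at this
  have hco : IsCoprime h₁ g₁ := hsep.isCoprime
  have hmap : (X ^ n - 1 : (ZMod (p ^ a))[X]).map π = h₁ * g₁ := by
    rw [Polynomial.map_sub, Polynomial.map_pow, map_X, Polynomial.map_one, ← hg₁]
  obtain ⟨h, g, hm, hdeg, hh, hg, hfe⟩ :=
    aux_exists π t hsurj hker ha ht h₁monic hco hmap
  constructor
  · refine ⟨h, ⟨hm, ⟨g, hfe⟩, hh⟩, ?_⟩
    rintro h' ⟨hm', hd', hh'⟩
    exact aux_unique π t hsurj hker hnil hco hmap hm' hm hd' ⟨g, hfe⟩ hh' hh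
  · intro h' hm' hd' hh'
    exact aux_irred π t hsurj hker hnil hh' h₁irr
end

section
/- Let p be a prime and n a positive integer not divisible by p. For every monic irreducible polynomial h₁ ∈ (ZMod p)[X] dividing X^n − 1, there exists a unique monic polynomial h ∈ ℤ_p[X] such that h divides X^n − 1 in ℤ_p[X] and the image of h under the coefficientwise reduction map ℤ_p[X] → (ZMod p)[X] equals h₁; moreover this h is irreducible in ℤ_p[X]. -/
open Polynomial

namespace HenselAux

variable {p : ℕ} [hp : Fact p.Prime]

lemma dvd_iff_toZMod_eq_zero (x : ℤ_[p]) :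
    (p : ℤ_[p]) ∣ x ↔ PadicInt.toZMod x = 0 := by
  rw [← RingHom.mem_ker, PadicInt.ker_toZMod, PadicInt.maximalIdeal_eq_span_p,
    Ideal.mem_span_singleton]

lemma eq_zero_of_forall_pow_dvd (x : ℤ_[p]) (h : ∀ k : ℕ, (p : ℤ_[p]) ^ k ∣ x) : x = 0 := by
  by_contra hx
  have hpos : 0 < ‖x‖ := norm_pos_iff.mpr hx
  have h1 : (1:ℝ) < p := by exact_mod_cast hp.out.one_lt
  obtain ⟨k, hk⟩ := exists_pow_lt_of_lt_one hpos (by rw [inv_lt_one_iff₀]; right; exact h1 : (p:ℝ)⁻¹ < 1)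
  have := (PadicInt.norm_le_pow_iff_mem_span_pow x k).mpr
    (Ideal.mem_span_singleton.mpr (by exact_mod_cast h k))
  rw [zpow_neg, zpow_natCast] at this
  have : ‖x‖ ≤ ((p:ℝ)⁻¹) ^ k := by rwa [inv_pow]
  linarith
variable {p : ℕ} [hp : Fact p.Prime]

lemma C_p_dvd_iff_map_eq_zero (f : ℤ_[p][X]) :
    C (p : ℤ_[p]) ∣ f ↔ f.map (PadicInt.toZMod (p := p)) = 0 := by
  rw [C_dvd_iff_dvd_coeff, Polynomial.ext_iff]
  simp only [coeff_map, coeff_zero]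
  constructor
  · intro h i; exact (dvd_iff_toZMod_eq_zero _).mp (h i)
  · intro h i; exact (dvd_iff_toZMod_eq_zero _).mpr (h i)

lemma poly_eq_zero_of_forall_pow_dvd (f : ℤ_[p][X])
    (h : ∀ k : ℕ, C ((p : ℤ_[p]) ^ k) ∣ f) : f = 0 := by
  ext i
  refine eq_zero_of_forall_pow_dvd _ (fun k => ?_)
  exact (C_dvd_iff_dvd_coeff _ _).mp (h k) i

noncomputable def liftP (q : (ZMod p)[X]) : ℤ_[p][X] :=
  ⟨⟨q.toFinsupp.coeff.mapRange (fun a => ((a.val : ℕ) : ℤ_[p])) (by simp)⟩⟩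

lemma coeff_liftP (q : (ZMod p)[X]) (i : ℕ) :
    (liftP q).coeff i = (((q.coeff i).val : ℕ) : ℤ_[p]) := rfl

lemma map_liftP (q : (ZMod p)[X]) : (liftP q).map (PadicInt.toZMod (p := p)) = q := by
  ext i
  rw [coeff_map, coeff_liftP, map_natCast]
  exact ZMod.natCast_rightInverse (q.coeff i)

lemma degree_liftP_le (q : (ZMod p)[X]) : (liftP q).degree ≤ q.degree := by
  rw [degree_le_iff_coeff_zero]
  intro m hm
  rw [coeff_liftP, coeff_eq_zero_of_degree_lt hm]
  simp

lemma monic_liftP {q : (ZMod p)[X]} (hq : q.Monic) : (liftP q).Monic := by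
  have h1 : (liftP q).coeff q.natDegree = 1 := by
    haveI : Fact (1 < p) := ⟨hp.out.one_lt⟩
    rw [coeff_liftP, hq.coeff_natDegree, ZMod.val_one]
    simp
  have hd : (liftP q).natDegree = q.natDegree := by
    refine le_antisymm (natDegree_le_natDegree (degree_liftP_le q)) ?_
    exact le_natDegree_of_ne_zero (h1 ▸ one_ne_zero)
  rwa [Monic, leadingCoeff, hd]

lemma degree_liftP_of_monic {q : (ZMod p)[X]} (hq : q.Monic) : (liftP q).degree = q.degree := by
  rw [← (monic_liftP hq).degree_map (PadicInt.toZMod (p := p)), map_liftP]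
section Step
variable {f : ℤ_[p][X]} {g₀ k₀ : (ZMod p)[X]}

lemma hensel_step (hf : f.Monic) (hg₀ : g₀.Monic) (hk₀ : k₀.Monic)
    (hmap : f.map (PadicInt.toZMod (p := p)) = g₀ * k₀) (hco : IsCoprime g₀ k₀)
    (k : ℕ) (G K : ℤ_[p][X]) (hG : G.Monic) (hK : K.Monic)
    (hGm : G.map (PadicInt.toZMod (p := p)) = g₀)
    (hKm : K.map (PadicInt.toZMod (p := p)) = k₀)
    (hdvd : C ((p : ℤ_[p]) ^ (k+1)) ∣ f - G * K) :
    ∃ G' K' : ℤ_[p][X], G'.Monic ∧ K'.Monic ∧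
      G'.map (PadicInt.toZMod (p := p)) = g₀ ∧ K'.map (PadicInt.toZMod (p := p)) = k₀ ∧
      C ((p : ℤ_[p]) ^ (k+2)) ∣ f - G' * K' ∧
      C ((p : ℤ_[p]) ^ (k+1)) ∣ G' - G ∧ C ((p : ℤ_[p]) ^ (k+1)) ∣ K' - K := by
  obtain ⟨D, hD⟩ := hdvd
  have hp0 : ((p : ℤ_[p]) ^ (k+1)) ≠ 0 := pow_ne_zero _ (by
    exact_mod_cast Nat.cast_ne_zero.mpr hp.out.ne_zero)
  have hGd : G.degree = g₀.degree := by rw [← hGm, hG.degree_map]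
  have hKd : K.degree = k₀.degree := by rw [← hKm, hK.degree_map]
  have hfd : f.degree = g₀.degree + k₀.degree := by
    rw [← hf.degree_map (PadicInt.toZMod (p := p)), hmap, degree_mul]
  have hGKd : (G * K).degree = f.degree := by rw [degree_mul, hGd, hKd, hfd]
  have hDdeg : D.degree < g₀.degree + k₀.degree := by
    rcases eq_or_ne D 0 with rfl | hD0
    · rw [degree_zero, ← hfd]
      exact Ne.bot_lt (fun h => hf.ne_zero (degree_eq_bot.mp h))
    · have hsub : (f - G * K).degree < f.degree := by
        apply degree_sub_lt hGKd.symm hf.ne_zero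
        rw [hf.leadingCoeff, (hG.mul hK).leadingCoeff]
      rw [hD, degree_mul, degree_C hp0, zero_add] at hsub
      rwa [hfd] at hsub
  set σ := PadicInt.toZMod (p := p) with hσ
  set d1 : (ZMod p)[X] := D.map σ with hd1
  have hd1deg : d1.degree < g₀.degree + k₀.degree := lt_of_le_of_lt (degree_map_le) hDdeg
  obtain ⟨a, b, hab⟩ := hco
  set u1 : (ZMod p)[X] := (b * d1) %ₘ g₀ with hu1def
  set q1 : (ZMod p)[X] := (b * d1) /ₘ g₀ with hq1def
  set v1 : (ZMod p)[X] := a * d1 + q1 * k₀ with hv1def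
  have hu1deg : u1.degree < g₀.degree := degree_modByMonic_lt _ hg₀
  have hdiv : u1 + g₀ * q1 = b * d1 := modByMonic_add_div (b * d1) g₀
  have hkey : v1 * g₀ + u1 * k₀ = d1 := by
    linear_combination d1 * hab + k₀ * hdiv
  have hg₀bot : g₀.degree ≠ ⊥ := fun h => hg₀.ne_zero (degree_eq_bot.mp h)
  have hk₀bot : k₀.degree ≠ ⊥ := fun h => hk₀.ne_zero (degree_eq_bot.mp h)
  have hv1deg : v1.degree < k₀.degree := by
    rcases eq_or_ne v1 0 with h0 | hv0
    · rw [h0, degree_zero]; exact Ne.bot_lt hk₀bot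
    · have hv1g : v1 * g₀ = d1 - u1 * k₀ := by linear_combination hkey
      have h2 : (d1 - u1 * k₀).degree < g₀.degree + k₀.degree := by
        apply lt_of_le_of_lt (degree_sub_le _ _)
        rw [max_lt_iff]
        refine ⟨hd1deg, ?_⟩
        rw [degree_mul]
        exact WithBot.add_lt_add_right hk₀bot hu1deg
      rw [← hv1g, degree_mul] at h2
      rw [add_comm g₀.degree k₀.degree] at h2
      exact (WithBot.add_lt_add_iff_right hg₀bot).mp h2
  set c : ℤ_[p][X] := C ((p : ℤ_[p]) ^ (k+1)) with hc
  have hmapc : c.map σ = 0 := by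
    rw [map_C]
    have : σ ((p : ℤ_[p]) ^ (k+1)) = 0 := by
      rw [map_pow, map_natCast, ZMod.natCast_self, zero_pow (Nat.succ_ne_zero k)]
    rw [this, map_zero]
  set u : ℤ_[p][X] := liftP u1 with hu
  set v : ℤ_[p][X] := liftP v1 with hv
  refine ⟨G + c * u, K + c * v, ?_, ?_, ?_, ?_, ?_, ⟨u, by ring⟩, ⟨v, by ring⟩⟩
  · apply hG.add_of_left
    apply lt_of_le_of_lt (degree_mul_le _ _)
    apply lt_of_le_of_lt (add_le_add degree_C_le (degree_liftP_le u1))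
    rw [zero_add, hGd]
    exact hu1deg
  · apply hK.add_of_left
    apply lt_of_le_of_lt (degree_mul_le _ _)
    apply lt_of_le_of_lt (add_le_add degree_C_le (degree_liftP_le v1))
    rw [zero_add, hKd]
    exact hv1deg
  · rw [Polynomial.map_add, Polynomial.map_mul, hmapc, zero_mul, add_zero, hGm]
  · rw [Polynomial.map_add, Polynomial.map_mul, hmapc, zero_mul, add_zero, hKm]
  · have hE : f - (G + c * u) * (K + c * v) = c * (D - (u * K + v * G) - c * (u * v)) := by
      linear_combination hD
    rw [hE]
    have : C ((p : ℤ_[p]) ^ (k+2)) = c * C (p : ℤ_[p]) := by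
      rw [hc, ← C_mul, ← pow_succ]
    rw [this]
    apply mul_dvd_mul_left
    rw [C_p_dvd_iff_map_eq_zero]
    rw [Polynomial.map_sub, Polynomial.map_sub, Polynomial.map_add, Polynomial.map_mul,
      Polynomial.map_mul, Polynomial.map_mul, hmapc, zero_mul, sub_zero, hGm, hKm,
      map_liftP, map_liftP]
    rw [← hd1]
    linear_combination -hkey

end Step
lemma mem_smul_top_iff_dvd (m : ℕ) (x : ℤ_[p]) :
    x ∈ ((IsLocalRing.maximalIdeal ℤ_[p]) ^ m • ⊤ : Submodule ℤ_[p] ℤ_[p]) ↔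
      (p : ℤ_[p]) ^ m ∣ x := by
  rw [smul_eq_mul, Ideal.mul_top, PadicInt.maximalIdeal_eq_span_p,
    Ideal.span_singleton_pow, Ideal.mem_span_singleton]

lemma coeff_sum_C_mul_X_pow (L : ℕ → ℤ_[p]) (m j : ℕ) :
    (∑ i ∈ Finset.range m, C (L i) * X ^ i).coeff j = if j < m then L j else 0 := by
  rw [finset_sum_coeff]
  simp_rw [coeff_C_mul, coeff_X_pow, mul_ite, mul_one, mul_zero]
  rw [Finset.sum_ite_eq (Finset.range m) j L]
  simp

lemma exists_limit (G : ℕ → ℤ_[p][X]) (d : ℕ)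
    (hdeg : ∀ k, (G k).natDegree ≤ d)
    (hchain : ∀ k l, k ≤ l → C ((p : ℤ_[p]) ^ k) ∣ G l - G k) :
    ∃ g : ℤ_[p][X], g.natDegree ≤ d ∧ ∀ k, C ((p : ℤ_[p]) ^ k) ∣ g - G k := by
  have key : ∀ i : ℕ, ∃ L : ℤ_[p], ∀ k, (p : ℤ_[p]) ^ k ∣ (G k).coeff i - L := by
    intro i
    obtain ⟨L, hL⟩ := IsPrecomplete.prec
      (inferInstance : IsAdicComplete (IsLocalRing.maximalIdeal ℤ_[p]) ℤ_[p]).toIsPrecomplete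
      (f := fun k => (G k).coeff i) (by
        intro m n hmn
        rw [SModEq.sub_mem, mem_smul_top_iff_dvd]
        have := (C_dvd_iff_dvd_coeff _ _).mp (hchain m n hmn) i
        rw [coeff_sub] at this
        rw [← neg_sub]
        exact dvd_neg.mpr this)
    exact ⟨L, fun k => by
      have := hL k
      rw [SModEq.sub_mem, mem_smul_top_iff_dvd] at this
      exact this⟩
  choose L hL using key
  refine ⟨∑ i ∈ Finset.range (d+1), C (L i) * X ^ i, ?_, ?_⟩
  · apply natDegree_le_iff_coeff_eq_zero.mpr
    intro N hN
    rw [coeff_sum_C_mul_X_pow]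
    simp [Nat.not_lt.mpr hN]
  · intro k
    rw [C_dvd_iff_dvd_coeff]
    intro i
    rw [coeff_sub, coeff_sum_C_mul_X_pow]
    by_cases hi : i < d + 1
    · rw [if_pos hi]
      rw [← neg_sub ((G k).coeff i)]
      exact dvd_neg.mpr (hL i k)
    · rw [if_neg hi]
      have : (G k).coeff i = 0 :=
        coeff_eq_zero_of_natDegree_lt (lt_of_le_of_lt (hdeg k) (Nat.lt_of_lt_of_le (Nat.lt_succ_self d) (Nat.not_lt.mp hi)))
      simp [this]
lemma monic_of_coeff {g : ℤ_[p][X]} {d : ℕ} (hdeg : g.natDegree ≤ d) (h1 : g.coeff d = 1) :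
    g.Monic ∧ g.natDegree = d := by
  have hd : g.natDegree = d :=
    le_antisymm hdeg (le_natDegree_of_ne_zero (h1 ▸ one_ne_zero))
  exact ⟨by rwa [Monic, leadingCoeff, hd], hd⟩

lemma hensel_lift_exists {f : ℤ_[p][X]} {g₀ k₀ : (ZMod p)[X]} (hf : f.Monic) (hg₀ : g₀.Monic)
    (hk₀ : k₀.Monic) (hmap : f.map (PadicInt.toZMod (p := p)) = g₀ * k₀) (hco : IsCoprime g₀ k₀) :
    ∃ G K : ℤ_[p][X], G.Monic ∧ K.Monic ∧ f = G * K ∧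
      G.map (PadicInt.toZMod (p := p)) = g₀ ∧ K.map (PadicInt.toZMod (p := p)) = k₀ := by
  set σ := PadicInt.toZMod (p := p) with hσ
  set Inv : ℕ → ℤ_[p][X] × ℤ_[p][X] → Prop := fun k GK =>
    GK.1.Monic ∧ GK.2.Monic ∧ GK.1.map σ = g₀ ∧ GK.2.map σ = k₀ ∧
      C ((p : ℤ_[p]) ^ (k+1)) ∣ f - GK.1 * GK.2 with hInvDef
  have base : Inv 0 (liftP g₀, liftP k₀) := by
    refine ⟨monic_liftP hg₀, monic_liftP hk₀, map_liftP _, map_liftP _, ?_⟩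
    rw [pow_one, C_p_dvd_iff_map_eq_zero, Polynomial.map_sub, Polynomial.map_mul,
      map_liftP, map_liftP, hmap, sub_self]
  have step : ∀ (k : ℕ) (GK : ℤ_[p][X] × ℤ_[p][X]), Inv k GK → ∃ GK', Inv (k+1) GK' ∧
      C ((p : ℤ_[p]) ^ (k+1)) ∣ GK'.1 - GK.1 ∧ C ((p : ℤ_[p]) ^ (k+1)) ∣ GK'.2 - GK.2 := by
    rintro k ⟨G, K⟩ ⟨h1, h2, h3, h4, h5⟩
    obtain ⟨G', K', m1, m2, m3, m4, m5, m6, m7⟩ :=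
      hensel_step hf hg₀ hk₀ hmap hco k G K h1 h2 h3 h4 h5
    exact ⟨(G', K'), ⟨m1, m2, m3, m4, m5⟩, m6, m7⟩
  choose next hInvNext hd1 hd2 using step
  let F : ∀ k : ℕ, {GK : ℤ_[p][X] × ℤ_[p][X] // Inv k GK} := fun k =>
    Nat.rec ⟨(liftP g₀, liftP k₀), base⟩ (fun k ih => ⟨next k ih.1 ih.2, hInvNext k ih.1 ih.2⟩) k
  set G : ℕ → ℤ_[p][X] := fun k => (F k).1.1 with hGdef
  set K : ℕ → ℤ_[p][X] := fun k => (F k).1.2 with hKdef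
  have hInvk : ∀ k, Inv k ((G k, K k)) := fun k => (F k).2
  have hGdiff : ∀ k, C ((p : ℤ_[p]) ^ (k+1)) ∣ G (k+1) - G k := fun k =>
    hd1 k (F k).1 (F k).2
  have hKdiff : ∀ k, C ((p : ℤ_[p]) ^ (k+1)) ∣ K (k+1) - K k := fun k =>
    hd2 k (F k).1 (F k).2
  have chain : ∀ (Q : ℕ → ℤ_[p][X]), (∀ k, C ((p : ℤ_[p]) ^ (k+1)) ∣ Q (k+1) - Q k) →
      ∀ k l, k ≤ l → C ((p : ℤ_[p]) ^ k) ∣ Q l - Q k := by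
    intro Q hQ k l hkl
    induction l, hkl using Nat.le_induction with
    | base => simp
    | succ l hkl ih =>
      have h1 : C ((p : ℤ_[p]) ^ k) ∣ Q (l+1) - Q l :=
        dvd_trans (map_dvd C (pow_dvd_pow _ (Nat.le_succ_of_le hkl))) (hQ l)
      have e : Q (l+1) - Q k = (Q (l+1) - Q l) + (Q l - Q k) := by ring
      rw [e]
      exact dvd_add h1 ih
  have hndG : ∀ k, (G k).natDegree = g₀.natDegree := fun k => by
    have := (hInvk k).1.natDegree_map σ
    rw [(hInvk k).2.2.1] at this
    exact this.symm
  have hndK : ∀ k, (K k).natDegree = k₀.natDegree := fun k => by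
    have := (hInvk k).2.1.natDegree_map σ
    rw [(hInvk k).2.2.2.1] at this
    exact this.symm
  obtain ⟨g, hgdeg, hgdvd⟩ := exists_limit G g₀.natDegree (fun k => (hndG k).le)
    (chain G hGdiff)
  obtain ⟨h, hhdeg, hhdvd⟩ := exists_limit K k₀.natDegree (fun k => (hndK k).le)
    (chain K hKdiff)
  have hcoeff : ∀ (Q : ℕ → ℤ_[p][X]) (q : ℤ_[p][X]) (d : ℕ),
      (∀ k, C ((p : ℤ_[p]) ^ k) ∣ q - Q k) → (∀ k, (Q k).coeff d = 1) → q.coeff d = 1 := by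
    intro Q q d hdvd hone
    have : ∀ k : ℕ, (p : ℤ_[p]) ^ k ∣ q.coeff d - 1 := fun k => by
      have := (C_dvd_iff_dvd_coeff _ _).mp (hdvd k) d
      rwa [coeff_sub, hone k] at this
    have h0 := eq_zero_of_forall_pow_dvd _ this
    have := sub_eq_zero.mp h0
    exact this
  have hg1 : g.coeff g₀.natDegree = 1 := by
    refine hcoeff G g _ hgdvd (fun k => ?_)
    rw [← hndG k]
    exact (hInvk k).1.coeff_natDegree
  have hh1 : h.coeff k₀.natDegree = 1 := by
    refine hcoeff K h _ hhdvd (fun k => ?_)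
    rw [← hndK k]
    exact (hInvk k).2.1.coeff_natDegree
  obtain ⟨hgmonic, -⟩ := monic_of_coeff hgdeg hg1
  obtain ⟨hhmonic, -⟩ := monic_of_coeff hhdeg hh1
  have hgmap : g.map σ = g₀ := by
    have h1 := hgdvd 1
    rw [pow_one, C_p_dvd_iff_map_eq_zero, Polynomial.map_sub, sub_eq_zero] at h1
    rw [h1]
    exact (hInvk 1).2.2.1
  have hhmap : h.map σ = k₀ := by
    have h1 := hhdvd 1
    rw [pow_one, C_p_dvd_iff_map_eq_zero, Polynomial.map_sub, sub_eq_zero] at h1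
    rw [h1]
    exact (hInvk 1).2.2.2.1
  have hfgh : f = g * h := by
    have hall : ∀ k : ℕ, C ((p : ℤ_[p]) ^ k) ∣ f - g * h := fun k => by
      have e : f - g * h = (f - G k * K k) + (-((g - G k) * K k) + -(G k * (h - K k))
          + -((g - G k) * (h - K k))) := by ring
      rw [e]
      refine dvd_add (dvd_trans (map_dvd C (pow_dvd_pow _ (Nat.le_succ k)))
        (hInvk k).2.2.2.2) (dvd_add (dvd_add ?_ ?_) ?_)
      · exact dvd_neg.mpr ((hgdvd k).mul_right _)
      · exact dvd_neg.mpr ((hhdvd k).mul_left _)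
      · exact dvd_neg.mpr ((hgdvd k).mul_right _)
    exact (sub_eq_zero.mp (poly_eq_zero_of_forall_pow_dvd _ hall)).symm ▸ rfl
  exact ⟨g, h, hgmonic, hhmonic, hfgh, hgmap, hhmap⟩
lemma hensel_lift_unique {g₀ k₀ : (ZMod p)[X]} (hg₀ : g₀.Monic)
    (hk₀ : k₀.Monic) (hco : IsCoprime g₀ k₀)
    {G K G' K' : ℤ_[p][X]} (hG : G.Monic) (hK : K.Monic) (hG' : G'.Monic) (hK' : K'.Monic)
    (hGm : G.map (PadicInt.toZMod (p := p)) = g₀) (hKm : K.map (PadicInt.toZMod (p := p)) = k₀)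
    (hG'm : G'.map (PadicInt.toZMod (p := p)) = g₀) (hK'm : K'.map (PadicInt.toZMod (p := p)) = k₀)
    (heq : G * K = G' * K') : G = G' ∧ K = K' := by
  set σ := PadicInt.toZMod (p := p) with hσ
  have hp0 : ∀ m : ℕ, ((p : ℤ_[p]) ^ m) ≠ 0 := fun m => pow_ne_zero _ (by
    exact_mod_cast Nat.cast_ne_zero.mpr hp.out.ne_zero)
  have hGd : G.degree = g₀.degree := by rw [← hGm, hG.degree_map]
  have hG'd : G'.degree = g₀.degree := by rw [← hG'm, hG'.degree_map]
  have hKd : K.degree = k₀.degree := by rw [← hKm, hK.degree_map]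
  have hK'd : K'.degree = k₀.degree := by rw [← hK'm, hK'.degree_map]
  have hg₀bot : g₀.degree ≠ ⊥ := fun hb => hg₀.ne_zero (degree_eq_bot.mp hb)
  have hk₀bot : k₀.degree ≠ ⊥ := fun hb => hk₀.ne_zero (degree_eq_bot.mp hb)
  have main : ∀ m : ℕ, C ((p : ℤ_[p]) ^ (m+1)) ∣ G' - G ∧ C ((p : ℤ_[p]) ^ (m+1)) ∣ K' - K := by
    intro m
    induction m with
    | zero =>
      constructor <;>
        · rw [pow_one, C_p_dvd_iff_map_eq_zero, Polynomial.map_sub, sub_eq_zero]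
          simp only [← hσ, hGm, hG'm, hKm, hK'm]
    | succ m ih =>
      obtain ⟨⟨s, hs⟩, ⟨t, ht⟩⟩ := ih
      set c : ℤ_[p][X] := C ((p : ℤ_[p]) ^ (m+1)) with hc
      have hcne : c ≠ 0 := fun hcz => hp0 (m+1) (C_eq_zero.mp (hc ▸ hcz))
      have hinner : G * t + s * K + c * (s * t) = 0 := by
        have h0 : c * (G * t + s * K + c * (s * t)) = 0 := by linear_combination -heq - K' * hs - (G + c * s) * ht
        exact (mul_eq_zero.mp h0).resolve_left hcne
      have hmapc : c.map σ = 0 := by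
        rw [hc, map_C]
        have : σ ((p : ℤ_[p]) ^ (m+1)) = 0 := by
          rw [map_pow, map_natCast, ZMod.natCast_self, zero_pow (Nat.succ_ne_zero m)]
        rw [this, map_zero]
      have hres : g₀ * (t.map σ) + (s.map σ) * k₀ = 0 := by
        have := congrArg (Polynomial.map σ) hinner
        rwa [Polynomial.map_add, Polynomial.map_add, Polynomial.map_mul, Polynomial.map_mul,
          Polynomial.map_mul, hmapc, zero_mul, add_zero, hGm, hKm, Polynomial.map_zero] at this
      have hsdeg : s.degree < g₀.degree := by
        rcases eq_or_ne s 0 with rfl | hsne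
        · rw [degree_zero]; exact Ne.bot_lt hg₀bot
        · have h1 : (G' - G).degree < g₀.degree := by
            rcases eq_or_ne (G' - G) 0 with h0 | hne
            · rw [h0, degree_zero]; exact Ne.bot_lt hg₀bot
            · have := degree_sub_lt (hG'd.trans hGd.symm) hG'.ne_zero
                (by rw [hG.leadingCoeff, hG'.leadingCoeff])
              rwa [hG'd] at this
          rw [hs, degree_mul, degree_C (hp0 (m+1)), zero_add] at h1
          exact h1
      have hsmap : s.map σ = 0 := by
        have hdvd : g₀ ∣ (s.map σ) * k₀ := ⟨-(t.map σ), by linear_combination hres⟩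
        have hdvd2 : g₀ ∣ s.map σ := hco.dvd_of_dvd_mul_right hdvd
        exact eq_zero_of_dvd_of_degree_lt hdvd2 (lt_of_le_of_lt degree_map_le hsdeg)
      have htmap : t.map σ = 0 := by
        rw [hsmap, zero_mul, add_zero, mul_eq_zero] at hres
        exact hres.resolve_left hg₀.ne_zero
      have hps : C (p : ℤ_[p]) ∣ s := (C_p_dvd_iff_map_eq_zero s).mpr hsmap
      have hpt : C (p : ℤ_[p]) ∣ t := (C_p_dvd_iff_map_eq_zero t).mpr htmap
      have hfact : C ((p : ℤ_[p]) ^ (m+2)) = c * C (p : ℤ_[p]) := by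
        rw [hc, ← C_mul, ← pow_succ]
      constructor
      · rw [hfact, hs]; exact mul_dvd_mul_left c hps
      · rw [hfact, ht]; exact mul_dvd_mul_left c hpt
  constructor
  · have : G' - G = 0 := poly_eq_zero_of_forall_pow_dvd _ (fun k =>
      dvd_trans (map_dvd C (pow_dvd_pow _ (Nat.le_succ k))) (main k).1)
    exact (sub_eq_zero.mp this).symm
  · have : K' - K = 0 := poly_eq_zero_of_forall_pow_dvd _ (fun k =>
      dvd_trans (map_dvd C (pow_dvd_pow _ (Nat.le_succ k))) (main k).2)
    exact (sub_eq_zero.mp this).symm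
lemma isUnit_of_isUnit_map {a : ℤ_[p][X]} (hu : IsUnit a.leadingCoeff)
    (h : IsUnit (a.map (PadicInt.toZMod (p := p)))) : IsUnit a := by
  have hne : (PadicInt.toZMod (p := p)) a.leadingCoeff ≠ 0 :=
    (hu.map (PadicInt.toZMod (p := p))).ne_zero
  have hnd : (a.map (PadicInt.toZMod (p := p))).natDegree = a.natDegree :=
    natDegree_map_of_leadingCoeff_ne_zero _ hne
  have h0 : a.natDegree = 0 := by
    rw [← hnd]; exact natDegree_eq_zero_of_isUnit h
  rw [eq_C_of_natDegree_eq_zero h0]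
  rw [isUnit_C]
  have : a.coeff a.natDegree = a.leadingCoeff := rfl
  rw [h0] at this
  rw [this]
  exact hu

end HenselAux

theorem stmt1 (p : ℕ) [Fact p.Prime] (n : ℕ) (hn : 0 < n) (hpn : ¬ p ∣ n)
    (h₁ : Polynomial (ZMod p)) (h₁monic : h₁.Monic) (h₁irr : Irreducible h₁)
    (h₁dvd : h₁ ∣ (X ^ n - 1 : Polynomial (ZMod p))) :
    (∃! h : Polynomial ℤ_[p], h.Monic ∧ h ∣ (X ^ n - 1) ∧
        h.map (PadicInt.toZMod (p := p)) = h₁) ∧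
    (∀ h : Polynomial ℤ_[p], h.Monic → h ∣ (X ^ n - 1) →
        h.map (PadicInt.toZMod (p := p)) = h₁ → Irreducible h) := by
  open HenselAux in
  set σ := PadicInt.toZMod (p := p) with hσ
  have hC1 : ∀ (R : Type) [CommRing R], (X ^ n - 1 : R[X]) = X ^ n - C 1 := by
    intro R _; rw [map_one]
  have hfmonic : (X ^ n - 1 : ℤ_[p][X]).Monic := by
    rw [hC1]; exact monic_X_pow_sub_C 1 hn.ne'
  have hXmonic : (X ^ n - 1 : (ZMod p)[X]).Monic := by
    rw [hC1]; exact monic_X_pow_sub_C 1 hn.ne'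
  have hfmap : (X ^ n - 1 : ℤ_[p][X]).map σ = (X ^ n - 1 : (ZMod p)[X]) := by
    rw [Polynomial.map_sub, Polynomial.map_pow, map_X, Polynomial.map_one]
  have hsep : (X ^ n - 1 : (ZMod p)[X]).Separable := by
    have hn0 : ((n : ZMod p)) ≠ 0 := by
      rwa [Ne, ZMod.natCast_eq_zero_iff]
    have := Polynomial.separable_X_pow_sub_C (1 : ZMod p) hn0 one_ne_zero
    rwa [map_one] at this
  obtain ⟨k₀, hk₀eq⟩ := h₁dvd
  have hk₀monic : k₀.Monic := h₁monic.of_mul_monic_left (hk₀eq ▸ hXmonic)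
  have hco : IsCoprime h₁ k₀ := (hk₀eq ▸ hsep).isCoprime
  obtain ⟨G, K, hGmonic, hKmonic, hfGK, hGmap, hKmap⟩ :=
    hensel_lift_exists hfmonic h₁monic hk₀monic (by rw [hfmap, hk₀eq]) hco
  have huniq : ∀ h : ℤ_[p][X], h.Monic → h ∣ (X ^ n - 1) → h.map σ = h₁ → h = G := by
    intro h hmon hdvd hmap'
    obtain ⟨c, hc⟩ := hdvd
    have hcmonic : c.Monic := hmon.of_mul_monic_left (hc ▸ hfmonic)
    have hcmap : c.map σ = k₀ := by
      have : h₁ * (c.map σ) = h₁ * k₀ := by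
        conv_lhs => rw [← hmap', ← Polynomial.map_mul, ← hc, hfmap, hk₀eq]
      exact mul_left_cancel₀ h₁monic.ne_zero this
    exact (hensel_lift_unique h₁monic hk₀monic hco hmon hcmonic hGmonic hKmonic
      hmap' hcmap hGmap hKmap (by rw [← hc, ← hfGK])).1
  constructor
  · exact ⟨G, ⟨hGmonic, ⟨K, hfGK⟩, hGmap⟩, fun h ⟨h1, h2, h3⟩ => huniq h h1 h2 h3⟩
  · intro h hmon hdvd hmap'
    have hnd : h.natDegree = h₁.natDegree := by
      rw [← hmap']; exact (hmon.natDegree_map σ).symm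
    constructor
    · intro hu
      have := natDegree_eq_zero_of_isUnit hu
      rw [hnd] at this
      exact absurd this h₁irr.natDegree_pos.ne'
    · intro a b hab
      have hlc : a.leadingCoeff * b.leadingCoeff = 1 := by
        rw [← leadingCoeff_mul, ← hab, hmon.leadingCoeff]
      have hmul : (a.map σ) * (b.map σ) = h₁ := by
        rw [← Polynomial.map_mul, ← hab, hmap']
      rcases h₁irr.isUnit_or_isUnit hmul.symm with hu | hu
      · exact Or.inl (isUnit_of_isUnit_map (IsUnit.of_mul_eq_one _ hlc) hu)
      · exact Or.inr (isUnit_of_isUnit_map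
          (IsUnit.of_mul_eq_one _ (by rwa [mul_comm] at hlc)) hu)
end

section
/- An ideal P of R_a is prime if and only if there exists a basic irreducible divisor h of X^n − 1 over ZMod p^a such that P is the ideal of R_a generated by h̄ and by the image of the constant polynomial p. Moreover, every prime ideal of R_a is maximal. -/
open Polynomial

section helpers

variable {p a : ℕ} [Fact p.Prime]

lemma zker (ha : a ≠ 0) (x : ZMod (p^a)) :
    ZMod.castHom (dvd_pow_self p ha) (ZMod p) x = 0 ↔ (p : ZMod (p^a)) ∣ x := by
  haveI : NeZero (p^a) := ⟨pow_ne_zero a (Fact.out : p.Prime).ne_zero⟩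
  constructor
  · intro h
    rw [ZMod.castHom_apply, ← ZMod.natCast_val, ZMod.natCast_eq_zero_iff] at h
    obtain ⟨m, hm⟩ := h
    refine ⟨(m : ZMod (p^a)), ?_⟩
    have : ((x.val : ℕ) : ZMod (p^a)) = x := by rw [ZMod.natCast_val, ZMod.cast_id]
    rw [← this, hm, Nat.cast_mul]
  · rintro ⟨y, rfl⟩
    rw [map_mul, map_natCast, ZMod.natCast_self, zero_mul]

lemma zkerpoly (ha : a ≠ 0) (q : Polynomial (ZMod (p^a))) :
    q.map (ZMod.castHom (dvd_pow_self p ha) (ZMod p)) = 0 ↔ C (p : ZMod (p^a)) ∣ q := by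
  rw [C_dvd_iff_dvd_coeff, Polynomial.ext_iff]
  simp only [coeff_map, coeff_zero]
  exact forall_congr' fun i => zker ha _

lemma zsurj (ha : a ≠ 0) : Function.Surjective (ZMod.castHom (dvd_pow_self p ha) (ZMod p)) := by
  haveI : NeZero p := ⟨(Fact.out : p.Prime).ne_zero⟩
  intro y
  exact ⟨(y.val : ZMod (p^a)), by rw [map_natCast, ZMod.natCast_val, ZMod.cast_id]⟩

lemma hensel_lift (ha : a ≠ 0) (f : Polynomial (ZMod (p^a))) (g₀ h₀ : Polynomial (ZMod p))
    (hg₀ : g₀.Monic)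
    (hfact : f.map (ZMod.castHom (dvd_pow_self p ha) (ZMod p)) = g₀ * h₀)
    (hcop : IsCoprime g₀ h₀) :
    ∃ g h : Polynomial (ZMod (p^a)),
      g.Monic ∧ g.map (ZMod.castHom (dvd_pow_self p ha) (ZMod p)) = g₀ ∧ f = g * h := by
  set φ := ZMod.castHom (dvd_pow_self p ha) (ZMod p) with hφ
  haveI : NeZero (p^a) := ⟨pow_ne_zero a (Fact.out : p.Prime).ne_zero⟩
  haveI : Fact (1 < p^a) := ⟨Nat.one_lt_pow ha (Fact.out : p.Prime).one_lt⟩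
  obtain ⟨u, v, huv⟩ := hcop
  have hsurj : Function.Surjective (Polynomial.map φ) :=
    fun q => (Polynomial.mem_lifts q).mp (by
      rw [Polynomial.lifts_iff_coeff_lifts]
      exact fun n => zsurj ha _) |>.imp fun _ h => h
  obtain ⟨G, hG, _, hGm⟩ :=
    Polynomial.lifts_and_degree_eq_and_monic ((Polynomial.mem_lifts g₀).mpr (hsurj g₀)) hg₀
  obtain ⟨H, hH⟩ := hsurj h₀
  obtain ⟨U, hU⟩ := hsurj u
  obtain ⟨V, hV⟩ := hsurj v
  have hφp : φ (p : ZMod (p^a)) = 0 := by rw [map_natCast, ZMod.natCast_self]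
  have key : ∀ k, 1 ≤ k → ∃ g h : Polynomial (ZMod (p^a)),
      g.Monic ∧ g.map φ = g₀ ∧ h.map φ = h₀ ∧ C (p : ZMod (p^a)) ^ k ∣ (f - g * h) := by
    intro k hk
    induction k, hk using Nat.le_induction with
    | base =>
      refine ⟨G, H, hGm, hG, hH, ?_⟩
      rw [pow_one, ← zkerpoly ha]
      simp [← hφ, Polynomial.map_sub, Polynomial.map_mul, hG, hH, hfact]
    | succ k hk ih =>
      obtain ⟨g, h, hgm, hg, hh, c, hc⟩ := ih
      set Q := (V * c) /ₘ g with hQ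
      set β := (V * c) %ₘ g with hβdef
      set γ := U * c + Q * h with hγdef
      have hβ : β = V * c - g * Q := by
        rw [eq_sub_iff_add_eq]; exact modByMonic_add_div (V * c) g
      refine ⟨g + C (p : ZMod (p^a)) ^ k * β, h + C (p : ZMod (p^a)) ^ k * γ, ?_, ?_, ?_, ?_⟩
      · apply hgm.add_of_left
        calc (C (p : ZMod (p^a)) ^ k * β).degree ≤ (C (p : ZMod (p^a)) ^ k).degree + β.degree :=
              degree_mul_le _ _
        _ ≤ 0 + β.degree := by
              gcongr
              rw [← C_pow]; exact degree_C_le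
        _ = β.degree := by rw [zero_add]
        _ < g.degree := degree_modByMonic_lt _ hgm
      · simp [Polynomial.map_add, Polynomial.map_mul, Polynomial.map_pow, hφp, hg,
          zero_pow (Nat.one_le_iff_ne_zero.mp hk)]
      · simp [Polynomial.map_add, Polynomial.map_mul, Polynomial.map_pow, hφp, hh,
          zero_pow (Nat.one_le_iff_ne_zero.mp hk)]
      · have key1 : C (p : ZMod (p^a)) ∣ (c - (β * h + γ * g)) := by
          have e : c - (β * h + γ * g) = c * (1 - (V * h + U * g)) := by
            rw [hβ, hγdef]; ring
          rw [e, ← zkerpoly ha]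
          simp only [← hφ, Polynomial.map_mul, Polynomial.map_sub, Polynomial.map_add,
            Polynomial.map_one, hg, hh, hU, hV]
          rw [show v * h₀ + u * g₀ = 1 by rw [add_comm]; exact huv, sub_self, mul_zero]
        have e2 : f - (g + C (p : ZMod (p^a)) ^ k * β) * (h + C (p : ZMod (p^a)) ^ k * γ)
            = C (p : ZMod (p^a)) ^ k *
              ((c - (β * h + γ * g)) - C (p : ZMod (p^a)) ^ k * (β * γ)) := by
          linear_combination hc
        rw [e2, pow_succ]
        refine mul_dvd_mul_left _ (dvd_sub key1 ?_)
        exact ((dvd_pow_self _ (Nat.one_le_iff_ne_zero.mp hk)).mul_right _)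
  obtain ⟨g, h, hgm, hg, _, hdvd⟩ := key a (Nat.one_le_iff_ne_zero.mpr ha)
  have hz : C (p : ZMod (p^a)) ^ a = 0 := by
    rw [← C_pow, ← Nat.cast_pow, ZMod.natCast_self, map_zero]
  rw [hz, zero_dvd_iff, sub_eq_zero] at hdvd
  exact ⟨g, h, hgm, hg, hdvd⟩

section glue
variable (ha : a ≠ 0)

local notation "φ" => ZMod.castHom (dvd_pow_self p ha) (ZMod p)

lemma pisurj : Function.Surjective (Polynomial.mapRingHom φ) := by
  rw [Polynomial.coe_mapRingHom]
  exact Polynomial.map_surjective _ (zsurj ha)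

lemma kerpi : RingHom.ker (Polynomial.mapRingHom φ) = Ideal.span {C (p : ZMod (p^a))} := by
  ext q
  rw [RingHom.mem_ker, Polynomial.coe_mapRingHom, zkerpoly ha, Ideal.mem_span_singleton]

lemma comap_span_eq (h : Polynomial (ZMod (p^a))) :
    Ideal.comap (Polynomial.mapRingHom φ) (Ideal.span {h.map φ}) =
      Ideal.span {h, C (p : ZMod (p^a))} := by
  apply le_antisymm
  · intro q hq
    rw [Ideal.mem_comap, Ideal.mem_span_singleton, Polynomial.coe_mapRingHom] at hq
    obtain ⟨b, hb⟩ := hq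
    obtain ⟨B, hB⟩ := Polynomial.map_surjective _ (zsurj ha) b
    have hker : (q - h * B).map φ = 0 := by
      rw [Polynomial.map_sub, Polynomial.map_mul, hB, ← hb, sub_self]
    rw [zkerpoly ha] at hker
    obtain ⟨w, hw⟩ := hker
    rw [Ideal.mem_span_pair]
    exact ⟨B, w, by linear_combination hw.symm⟩
  · rw [Ideal.span_le]
    rintro x (rfl | rfl)
    · rw [SetLike.mem_coe, Ideal.mem_comap]
      exact Ideal.subset_span rfl
    · rw [SetLike.mem_coe, Ideal.mem_comap]
      have : (Polynomial.mapRingHom φ) (C (p : ZMod (p^a))) = 0 := by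
        rw [Polynomial.coe_mapRingHom, Polynomial.map_C, map_natCast, ZMod.natCast_self, map_zero]
      rw [this]
      exact Ideal.zero_mem _
    
lemma span_pair_maximal (h : Polynomial (ZMod (p^a)))
    (hirr : Irreducible (h.map φ)) :
    (Ideal.span {h, C (p : ZMod (p^a))}).IsMaximal := by
  rw [← comap_span_eq ha h]
  haveI : (Ideal.span {h.map φ}).IsMaximal :=
    PrincipalIdealRing.isMaximal_of_irreducible hirr
  exact Ideal.comap_isMaximal_of_surjective _ (pisurj ha)

end glue

end helpers

/-- The quotient ring `(ZMod p^a)[X]/(X^n - 1)`. -/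
abbrev Rquot (p a n : ℕ) :=
  Polynomial (ZMod (p ^ a)) ⧸ Ideal.span {(X : Polynomial (ZMod (p ^ a))) ^ n - 1}

/-- The natural quotient map `(ZMod p^a)[X] → (ZMod p^a)[X]/(X^n - 1)`. -/
noncomputable abbrev rmk (p a n : ℕ) : Polynomial (ZMod (p ^ a)) →+* Rquot p a n :=
  Ideal.Quotient.mk _

/-- A basic irreducible divisor of `X^n - 1` over `ZMod p^a`: a monic divisor of `X^n - 1`
whose coefficientwise reduction modulo `p` is irreducible. -/
def BasicIrr (p a n : ℕ) [Fact p.Prime] (ha : a ≠ 0) (h : Polynomial (ZMod (p ^ a))) : Prop :=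
  h.Monic ∧ h ∣ (X ^ n - 1) ∧
    Irreducible (h.map (ZMod.castHom (dvd_pow_self p ha) (ZMod p)))

section main
variable {p a n : ℕ} [Fact p.Prime]

lemma down_maximal (ha : a ≠ 0) (h : Polynomial (ZMod (p^a))) (hb : BasicIrr p a n ha h) :
    (Ideal.span {rmk p a n h, rmk p a n (C (p : ZMod (p^a)))}).IsMaximal := by
  have hJ : (Ideal.span {h, C (p : ZMod (p^a))}).IsMaximal := span_pair_maximal ha h hb.2.2
  have hmap : Ideal.map (rmk p a n) (Ideal.span {h, C (p : ZMod (p^a))}) =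
      Ideal.span {rmk p a n h, rmk p a n (C (p : ZMod (p^a)))} := by
    rw [Ideal.map_span, Set.image_insert_eq, Set.image_singleton]
  have hIJ : Ideal.span {(X : Polynomial (ZMod (p^a)))^n - 1} ≤
      Ideal.span {h, C (p : ZMod (p^a))} := by
    rw [Ideal.span_singleton_le_iff_mem]
    obtain ⟨w, hw⟩ := hb.2.1
    rw [hw]
    exact Ideal.mul_mem_right _ _ (Ideal.subset_span (by simp))
  rcases Ideal.map_eq_top_or_isMaximal_of_surjective (rmk p a n)
      Ideal.Quotient.mk_surjective hJ with htop | hmax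
  · exfalso
    have h2 := congrArg (Ideal.comap (rmk p a n)) htop
    rw [Ideal.comap_map_of_surjective _ Ideal.Quotient.mk_surjective, Ideal.comap_top,
      ← RingHom.ker_eq_comap_bot, Ideal.mk_ker, sup_eq_left.mpr hIJ] at h2
    exact hJ.ne_top h2
  · rwa [hmap] at hmax

lemma forward (ha : a ≠ 0) (hn : 0 < n) (hpn : ¬ p ∣ n) (P : Ideal (Rquot p a n))
    (hP : P.IsPrime) : ∃ h : Polynomial (ZMod (p ^ a)), BasicIrr p a n ha h ∧
      P = Ideal.span {rmk p a n h, rmk p a n (C (p : ZMod (p ^ a)))} := by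
  set mk := rmk p a n
  set Q := P.comap mk with hQdef
  haveI hQ : Q.IsPrime := Ideal.IsPrime.comap mk
  have hCp : C (p : ZMod (p^a)) ∈ Q := by
    rw [Ideal.mem_comap]
    apply hP.mem_of_pow_mem a
    have h0 : (C (p : ZMod (p^a)))^a = 0 := by
      rw [← C_pow, ← Nat.cast_pow, ZMod.natCast_self, map_zero]
    rw [← map_pow, h0, map_zero]
    exact P.zero_mem
  have hXn : ((X : Polynomial (ZMod (p^a)))^n - 1) ∈ Q := by
    rw [Ideal.mem_comap]
    have h0 : mk ((X : Polynomial (ZMod (p^a)))^n - 1) = 0 :=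
      Ideal.Quotient.eq_zero_iff_mem.mpr (Ideal.subset_span rfl)
    rw [h0]; exact P.zero_mem
  set π := Polynomial.mapRingHom (ZMod.castHom (dvd_pow_self p ha) (ZMod p)) with hπdef
  have hkerQ : RingHom.ker π ≤ Q := by
    rw [hπdef, kerpi ha]
    exact (Ideal.span_singleton_le_iff_mem _).mpr hCp
  set Q' := Q.map π with hQ'def
  haveI hQ'p : Q'.IsPrime := Ideal.map_isPrime_of_surjective (pisurj ha) hkerQ
  have hXn' : ((X : Polynomial (ZMod p))^n - 1) ∈ Q' := by
    have h1 := Ideal.mem_map_of_mem π hXn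
    simpa only [map_sub, map_pow, map_one, hπdef, Polynomial.coe_mapRingHom,
      Polynomial.map_X] using h1
  have hne : ((X : Polynomial (ZMod p))^n - 1) ≠ 0 := by
    have hm : ((X : Polynomial (ZMod p))^n - 1).Monic := by
      simpa using monic_X_pow_sub_C (1 : ZMod p) hn.ne'
    exact hm.ne_zero
  obtain ⟨g₁, hg₁⟩ := Submodule.IsPrincipal.principal Q'
  rw [Ideal.submodule_span_eq] at hg₁
  have hg₁0 : g₁ ≠ 0 := by
    rintro rfl
    rw [hg₁, Ideal.span_singleton_eq_bot.mpr rfl] at hXn'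
    exact hne (Ideal.mem_bot.mp hXn')
  have hg₁prime : Prime g₁ := (Ideal.span_singleton_prime hg₁0).mp (hg₁ ▸ hQ'p)
  have hg₀m : (normalize g₁).Monic := monic_normalize hg₁0
  have hg₀span : Q' = Ideal.span {normalize g₁} := by
    rw [hg₁]
    exact (Ideal.span_singleton_eq_span_singleton.mpr (normalize_associated g₁)).symm
  have hg₀prime : Prime (normalize g₁) := ((normalize_associated g₁).symm).prime hg₁prime
  have hdvd : (normalize g₁) ∣ ((X : Polynomial (ZMod p))^n - 1) :=
    Ideal.mem_span_singleton.mp (hg₀span ▸ hXn')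
  obtain ⟨h₀, hh₀⟩ := hdvd
  have hsep : ((X : Polynomial (ZMod p))^n - 1).Separable := by
    have hnz : ((n : ZMod p) ≠ 0) := by
      rw [Ne, ZMod.natCast_eq_zero_iff]; exact hpn
    simpa using separable_X_pow_sub_C (1 : ZMod p) hnz one_ne_zero
  have hcop : IsCoprime (normalize g₁) h₀ := Polynomial.Separable.isCoprime (by rwa [← hh₀])
  have hfmap : ((X : Polynomial (ZMod (p^a)))^n - 1).map
      (ZMod.castHom (dvd_pow_self p ha) (ZMod p)) = normalize g₁ * h₀ := by
    rw [Polynomial.map_sub, Polynomial.map_pow, map_X, Polynomial.map_one]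
    exact hh₀
  obtain ⟨g, w, hgm, hgmap, hfac⟩ := hensel_lift ha ((X : Polynomial (ZMod (p^a)))^n - 1)
    (normalize g₁) h₀ hg₀m hfmap hcop
  refine ⟨g, ⟨hgm, ⟨w, hfac⟩, by rw [hgmap]; exact hg₀prime.irreducible⟩, ?_⟩
  have hQeq : Q = Ideal.span {g, C (p : ZMod (p^a))} := by
    have h1 : Ideal.comap π Q' = Q := by
      rw [hQ'def, Ideal.comap_map_of_surjective _ (pisurj ha), ← RingHom.ker_eq_comap_bot,
        sup_eq_left.mpr hkerQ]
    rw [← h1, hg₀span, ← hgmap]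
    exact comap_span_eq ha g
  calc P = Ideal.map mk Q := (Ideal.map_comap_of_surjective mk Ideal.Quotient.mk_surjective P).symm
  _ = Ideal.span {mk g, mk (C (p : ZMod (p^a)))} := by
      rw [hQeq, Ideal.map_span, Set.image_insert_eq, Set.image_singleton]

end main

theorem stmt2 (p : ℕ) [Fact p.Prime] (a n : ℕ) (ha : 0 < a) (hn : 0 < n) (hpn : ¬ p ∣ n)
    (P : Ideal (Rquot p a n)) :
    (P.IsPrime ↔ ∃ h : Polynomial (ZMod (p ^ a)), BasicIrr p a n ha.ne' h ∧
        P = Ideal.span {rmk p a n h, rmk p a n (C (p : ZMod (p ^ a)))}) ∧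
    (P.IsPrime → P.IsMaximal) := by
  constructor
  · constructor
    · exact forward ha.ne' hn hpn P
    · rintro ⟨h, hb, rfl⟩
      exact (down_maximal ha.ne' h hb).isPrime
  · intro hP
    obtain ⟨h, hb, rfl⟩ := forward ha.ne' hn hpn P hP
    exact down_maximal ha.ne' h hb
end

section
/- An ideal P of R_∞ is prime if and only if there exists a basic irreducible divisor h of X^n − 1 over ℤ_p such that either P is the principal ideal of R_∞ generated by h̄, or P is the ideal generated by h̄ and the image of the constant polynomial p. Moreover, P is a maximal ideal of R_∞ if and only if P is of the second form, i.e. P is generated by h̄ and p for some basic irreducible divisor h. -/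
open Polynomial

/-- The quotient ring `ℤ_p[X]/(X^n - 1)`. -/
abbrev RquotP (p n : ℕ) [Fact p.Prime] :=
  Polynomial ℤ_[p] ⧸ Ideal.span {(X : Polynomial ℤ_[p]) ^ n - 1}

/-- The natural quotient map `ℤ_p[X] → ℤ_p[X]/(X^n - 1)`. -/
noncomputable abbrev pmk (p n : ℕ) [Fact p.Prime] : Polynomial ℤ_[p] →+* RquotP p n :=
  Ideal.Quotient.mk _

/-- A basic irreducible divisor of `X^n - 1` over `ℤ_p`: a monic divisor of `X^n - 1`
whose coefficientwise reduction modulo `p` is irreducible. -/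
def BasicIrrP (p n : ℕ) [Fact p.Prime] (h : Polynomial ℤ_[p]) : Prop :=
  h.Monic ∧ h ∣ (X ^ n - 1) ∧ Irreducible (h.map (PadicInt.toZMod (p := p)))


variable {p : ℕ} [Fact p.Prime]

namespace Stmt3Aux

section coords
variable {O : Type*} [CommRing O] [Algebra ℤ_[p] O] {d : ℕ} (b : Module.Basis (Fin d) ℤ_[p] O)

lemma coord_mem (k : ℕ) (z : O) :
    z ∈ (Ideal.span {(p : O)})^k ↔ ∀ i, (p : ℤ_[p])^k ∣ b.equivFun z i := by
  have hp : (p : O) = algebraMap ℤ_[p] O (p : ℤ_[p]) := by simp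
  rw [Ideal.span_singleton_pow, Ideal.mem_span_singleton]
  constructor
  · rintro ⟨y, rfl⟩ i
    have : (p : O)^k * y = ((p : ℤ_[p])^k) • y := by
      rw [hp, Algebra.smul_def, map_pow]
    rw [this, map_smul]
    exact ⟨b.equivFun y i, rfl⟩
  · intro H
    choose c hc using H
    refine ⟨b.equivFun.symm c, ?_⟩
    have : (p : O)^k * b.equivFun.symm c = ((p : ℤ_[p])^k) • b.equivFun.symm c := by
      rw [hp, Algebra.smul_def, map_pow]
    rw [this]
    apply b.equivFun.injective
    rw [map_smul, LinearEquiv.apply_symm_apply]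
    funext i
    simpa using hc i

end coords

lemma zp_smod (k : ℕ) (x y : ℤ_[p]) :
    (x ≡ y [SMOD ((Ideal.span {(p : ℤ_[p])})^k • ⊤ : Submodule ℤ_[p] ℤ_[p])]) ↔
      (p : ℤ_[p])^k ∣ (x - y) := by
  rw [SModEq.sub_mem, smul_eq_mul, Ideal.mul_top, Ideal.span_singleton_pow,
    Ideal.mem_span_singleton]


section adic
variable {O : Type*} [CommRing O] [Algebra ℤ_[p] O] {d : ℕ}

lemma adicComplete_of_basis (b : Module.Basis (Fin d) ℤ_[p] O) :
    IsAdicComplete (Ideal.span {(p : O)}) O := by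
  have key : ∀ (k : ℕ) (z w : O),
      (z ≡ w [SMOD ((Ideal.span {(p : O)})^k • ⊤ : Submodule O O)]) ↔
        ∀ i, (p : ℤ_[p])^k ∣ (b.equivFun z i - b.equivFun w i) := by
    intro k z w
    rw [SModEq.sub_mem, smul_eq_mul, Ideal.mul_top, coord_mem b k]
    simp [map_sub]
  have hmax : (IsLocalRing.maximalIdeal ℤ_[p]) = Ideal.span {(p : ℤ_[p])} :=
    PadicInt.maximalIdeal_eq_span_p
  refine { haus' := ?_, prec' := ?_ }
  · -- Hausdorff
    intro z hz
    have hcoord : ∀ i, b.equivFun z i = 0 := by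
      intro i
      apply IsHausdorff.haus (inferInstance : IsHausdorff (IsLocalRing.maximalIdeal ℤ_[p]) ℤ_[p])
      intro k
      rw [hmax, zp_smod, sub_zero]
      have := (key k z 0).mp (hz k) i
      simpa using this
    have : b.equivFun z = 0 := funext hcoord
    have := b.equivFun.injective (by simpa using this)
    simpa using this
  · -- Precomplete
    intro F hF
    have Hi : ∀ i : Fin d, ∃ L : ℤ_[p], ∀ k : ℕ,
        (p : ℤ_[p])^k ∣ (b.equivFun (F k) i - L) := by
      intro i
      obtain ⟨L, hL⟩ := IsPrecomplete.prec
        (inferInstance : IsPrecomplete (IsLocalRing.maximalIdeal ℤ_[p]) ℤ_[p])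
        (f := fun k => b.equivFun (F k) i) (by
          intro m k hmk
          rw [hmax, zp_smod]
          exact (key m (F m) (F k)).mp (hF hmk) i)
      refine ⟨L, fun k => ?_⟩
      have := hL k
      rwa [hmax, zp_smod] at this
    choose L hL using Hi
    refine ⟨b.equivFun.symm L, fun k => ?_⟩
    rw [key k]
    intro i
    rw [LinearEquiv.apply_symm_apply]
    exact hL i k

lemma adicComplete (f : Polynomial ℤ_[p]) (hf : f.Monic) :
    IsAdicComplete (Ideal.span {(p : AdjoinRoot f)}) (AdjoinRoot f) :=
  adicComplete_of_basis (AdjoinRoot.powerBasis' hf).basis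

end adic


section red
variable (p)

lemma toZMod_surjective : Function.Surjective (PadicInt.toZMod (p := p)) := by
  intro a
  obtain ⟨k, rfl⟩ := ZMod.natCast_zmod_surjective (n := p) a
  exact ⟨(k : ℤ_[p]), by rw [map_natCast]⟩

lemma toZMod_eq_zero_iff (x : ℤ_[p]) :
    PadicInt.toZMod x = 0 ↔ (p : ℤ_[p]) ∣ x := by
  rw [← RingHom.mem_ker, PadicInt.ker_toZMod, PadicInt.maximalIdeal_eq_span_p,
    Ideal.mem_span_singleton]

lemma map_eq_zero_iff_C_dvd (q : Polynomial ℤ_[p]) :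
    q.map (PadicInt.toZMod (p := p)) = 0 ↔ C (p : ℤ_[p]) ∣ q := by
  rw [C_dvd_iff_dvd_coeff]
  constructor
  · intro h i
    rw [← toZMod_eq_zero_iff]
    have := congrArg (fun r => Polynomial.coeff r i) h
    simpa using this
  · intro h
    ext i
    simp only [coeff_map, coeff_zero]
    rw [toZMod_eq_zero_iff]
    exact h i

variable {p}
variable (f : Polynomial ℤ_[p])

/-- Reduction map `ℤ_p[X]/(f) → F_p[X]/(f mod p)`. -/
noncomputable def red : AdjoinRoot f →+*
    AdjoinRoot (f.map (PadicInt.toZMod (p := p))) :=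
  AdjoinRoot.lift ((AdjoinRoot.of _).comp (PadicInt.toZMod (p := p))) (AdjoinRoot.root _) (by
    rw [← Polynomial.eval₂_map]
    exact AdjoinRoot.eval₂_root _)

lemma red_mk (g : Polynomial ℤ_[p]) :
    red f (AdjoinRoot.mk f g) =
      AdjoinRoot.mk _ (g.map (PadicInt.toZMod (p := p))) := by
  rw [red, AdjoinRoot.lift_mk, ← Polynomial.eval₂_map, ← AdjoinRoot.algebraMap_eq,
    ← Polynomial.aeval_def, AdjoinRoot.aeval_eq]

lemma natCast_adjoinRoot_map_eq_zero :
    ((p : ℕ) : AdjoinRoot (f.map (PadicInt.toZMod (p := p)))) = 0 := by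
  rw [← map_natCast (AdjoinRoot.of (f.map (PadicInt.toZMod (p := p)))) p,
    ZMod.natCast_self, map_zero]

lemma ker_red : RingHom.ker (red f) = Ideal.span {(p : AdjoinRoot f)} := by
  ext z
  obtain ⟨g, rfl⟩ := AdjoinRoot.mk_surjective z
  rw [RingHom.mem_ker, red_mk, AdjoinRoot.mk_eq_zero, Ideal.mem_span_singleton]
  constructor
  · rintro ⟨cb, hcb⟩
    obtain ⟨c, rfl⟩ := Polynomial.map_surjective _ (toZMod_surjective p) cb
    have h0 : (g - f * c).map (PadicInt.toZMod (p := p)) = 0 := by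
      rw [Polynomial.map_sub, Polynomial.map_mul, hcb]; ring
    rw [map_eq_zero_iff_C_dvd] at h0
    obtain ⟨d, hd⟩ := h0
    have hmkC : (AdjoinRoot.mk f) (C (p : ℤ_[p])) = (p : AdjoinRoot f) := by
      have : (AdjoinRoot.mk f) (C (p : ℤ_[p])) = AdjoinRoot.of f (p : ℤ_[p]) := rfl
      rw [this, map_natCast]
    refine ⟨AdjoinRoot.mk f d, ?_⟩
    have : g = f * c + C (p : ℤ_[p]) * d := by rw [← hd]; ring
    rw [this, map_add, map_mul, map_mul, AdjoinRoot.mk_self, zero_mul, zero_add, hmkC]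
  · rintro ⟨y, hy⟩
    have : red f (AdjoinRoot.mk f g) = 0 := by
      rw [hy, map_mul, map_natCast, natCast_adjoinRoot_map_eq_zero, zero_mul]
    rw [red_mk, AdjoinRoot.mk_eq_zero] at this
    exact this

lemma exists_idem (hf : f.Monic) (e₀ : AdjoinRoot f)
    (h : e₀^2 - e₀ ∈ Ideal.span {(p : AdjoinRoot f)}) :
    ∃ e : AdjoinRoot f, e^2 = e ∧ e - e₀ ∈ Ideal.span {(p : AdjoinRoot f)} := by
  haveI := adicComplete f hf
  set I : Ideal (AdjoinRoot f) := Ideal.span {(p : AdjoinRoot f)}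
  have hmon : (X^2 - X : (AdjoinRoot f)[X]).Monic := by
    exact Polynomial.monic_X_pow_sub (p := (X : (AdjoinRoot f)[X])) (n := 2)
      (lt_of_le_of_lt Polynomial.degree_X_le (by norm_num))
  have heval : (X^2 - X : (AdjoinRoot f)[X]).eval e₀ = e₀^2 - e₀ := by simp
  have hder : (X^2 - X : (AdjoinRoot f)[X]).derivative.eval e₀ = 2*e₀ - 1 := by
    simp [Polynomial.derivative_sub]; ring
  have hunit : IsUnit (Ideal.Quotient.mk I
      ((X^2 - X : (AdjoinRoot f)[X]).derivative.eval e₀)) := by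
    rw [hder]
    apply IsUnit.of_mul_eq_one (Ideal.Quotient.mk I (2*e₀ - 1))
    rw [← map_mul, ← map_one (Ideal.Quotient.mk I)]
    rw [Ideal.Quotient.mk_eq_mk_iff_sub_mem]
    have : (2*e₀ - 1) * (2*e₀ - 1) - 1 = 4 * (e₀^2 - e₀) := by ring
    rw [this]
    exact I.mul_mem_left _ h
  obtain ⟨a, ha, ha'⟩ := HenselianRing.is_henselian (I := I)
    (X^2 - X) hmon e₀ (by rw [heval]; exact h) hunit
  refine ⟨a, ?_, ha'⟩
  have := ha
  simp only [Polynomial.IsRoot, Polynomial.eval_sub, Polynomial.eval_pow,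
    Polynomial.eval_X] at this
  exact sub_eq_zero.mp this

end red


section charpoly
variable {R O : Type*} [CommRing R] [CommRing O] [Algebra R O]

lemma pow_restrict_apply (x : O) (N : Submodule R O) (hx : ∀ z ∈ N, x * z ∈ N)
    (k : ℕ) (z : N) :
    ((((LinearMap.mulLeft R x).restrict hx)^k) z : O) = x^k * z := by
  induction k generalizing z with
  | zero => simp
  | succ k ih =>
      rw [pow_succ]
      have h1 : ((((LinearMap.mulLeft R x).restrict hx)^k *
          ((LinearMap.mulLeft R x).restrict hx)) z) =
          (((LinearMap.mulLeft R x).restrict hx)^k)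
            (((LinearMap.mulLeft R x).restrict hx) z) := rfl
      rw [h1, ih]
      have h2 : ((((LinearMap.mulLeft R x).restrict hx) z : O)) = x * z := rfl
      rw [h2]; ring

lemma aeval_restrict (x : O) (N : Submodule R O) (hx : ∀ z ∈ N, x * z ∈ N)
    (q : R[X]) (z : N) :
    ((Polynomial.aeval ((LinearMap.mulLeft R x).restrict hx) q) z : O)
      = Polynomial.aeval x q * z := by
  induction q using Polynomial.induction_on' with
  | add f g hf hg =>
      rw [map_add, map_add, add_mul, ← hf, ← hg]
      rfl
  | monomial k a =>
      rw [Polynomial.aeval_monomial, Polynomial.aeval_monomial]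
      have h1 : ((algebraMap R (Module.End R N) a *
          ((LinearMap.mulLeft R x).restrict hx)^k) z)
          = a • ((((LinearMap.mulLeft R x).restrict hx)^k) z) := rfl
      rw [h1]
      have h2 := pow_restrict_apply x N hx k z
      calc ((a • ((((LinearMap.mulLeft R x).restrict hx)^k) z) : N) : O)
          = a • (((((LinearMap.mulLeft R x).restrict hx)^k) z : N) : O) := rfl
        _ = a • (x^k * z) := by rw [h2]
        _ = algebraMap R O a * x^k * z := by
            rw [Algebra.smul_def, mul_assoc]

end charpoly

section piece

lemma charpoly_piece (f : Polynomial ℤ_[p]) (hf : f.Monic) (ε : AdjoinRoot f) :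
    ∃ a : Polynomial ℤ_[p], a.Monic ∧
      a.natDegree = Module.finrank ℤ_[p]
        (LinearMap.range (LinearMap.mulLeft ℤ_[p] ε)) ∧
      Polynomial.aeval (AdjoinRoot.root f) a * ε = 0 := by
  classical
  set N := LinearMap.range (LinearMap.mulLeft ℤ_[p] ε) with hN
  have hmapsTo : ∀ z ∈ N, (AdjoinRoot.root f) * z ∈ N := by
    rintro z ⟨y, rfl⟩
    exact ⟨AdjoinRoot.root f * y, by simp [LinearMap.mulLeft_apply]; ring⟩
  obtain ⟨m, bN⟩ := Submodule.basisOfPid (AdjoinRoot.powerBasis' hf).basis N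
  haveI := Module.Finite.of_basis bN
  haveI := Module.Free.of_basis bN
  set φ := (LinearMap.mulLeft ℤ_[p] (AdjoinRoot.root f)).restrict hmapsTo with hφ
  refine ⟨φ.charpoly, φ.charpoly_monic, φ.charpoly_natDegree, ?_⟩
  have hCH := φ.aeval_self_charpoly
  have hεN : ε ∈ N := ⟨1, by simp⟩
  have h0 := congrArg (fun (ψ : Module.End ℤ_[p] N) => ((ψ ⟨ε, hεN⟩ : N) : AdjoinRoot f)) hCH
  rw [hφ, aeval_restrict] at h0
  simpa using h0

lemma isCompl_idem (f : Polynomial ℤ_[p]) (e : AdjoinRoot f) (he : e^2 = e) :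
    IsCompl (LinearMap.range (LinearMap.mulLeft ℤ_[p] e))
      (LinearMap.range (LinearMap.mulLeft ℤ_[p] (1 - e))) := by
  constructor
  · rw [Submodule.disjoint_def]
    rintro z ⟨y, rfl⟩ ⟨w, hw⟩
    simp only [LinearMap.mulLeft_apply] at hw ⊢
    have h1 : e * (e * y) = e * y := by rw [← mul_assoc, ← pow_two, he]
    have h2 : e * ((1 - e) * w) = 0 := by
      have h3 : e * (1 - e) = 0 := by linear_combination -he
      rw [← mul_assoc, h3, zero_mul]
    rw [hw, h1] at h2
    exact h2
  · rw [codisjoint_iff_le_sup]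
    intro z _
    refine Submodule.mem_sup.mpr ⟨e * z, ⟨z, rfl⟩, (1 - e) * z, ⟨z, rfl⟩, by ring⟩

end piece


lemma finrank_sum_idem (f : Polynomial ℤ_[p]) (hf : f.Monic) (e : AdjoinRoot f)
    (he : e^2 = e) :
    Module.finrank ℤ_[p] (LinearMap.range (LinearMap.mulLeft ℤ_[p] e)) +
      Module.finrank ℤ_[p] (LinearMap.range (LinearMap.mulLeft ℤ_[p] (1 - e)))
      = f.natDegree := by
  classical
  set N1 := LinearMap.range (LinearMap.mulLeft ℤ_[p] e)
  set N2 := LinearMap.range (LinearMap.mulLeft ℤ_[p] (1 - e))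
  obtain ⟨m1, b1⟩ := Submodule.basisOfPid (AdjoinRoot.powerBasis' hf).basis N1
  obtain ⟨m2, b2⟩ := Submodule.basisOfPid (AdjoinRoot.powerBasis' hf).basis N2
  haveI := Module.Finite.of_basis b1
  haveI := Module.Free.of_basis b1
  haveI := Module.Finite.of_basis b2
  haveI := Module.Free.of_basis b2
  have hcompl := isCompl_idem f e he
  have hequiv := Submodule.prodEquivOfIsCompl N1 N2 hcompl
  have h1 : Module.finrank ℤ_[p] (N1 × N2) = Module.finrank ℤ_[p] (AdjoinRoot f) :=
    hequiv.finrank_eq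
  rw [Module.finrank_prod] at h1
  rw [h1, (AdjoinRoot.powerBasis' hf).finrank, AdjoinRoot.powerBasis'_dim]

lemma lift_factor (f : Polynomial ℤ_[p]) (hf : f.Monic) {A B : Polynomial (ZMod p)}
    (hAB : f.map (PadicInt.toZMod (p := p)) = A * B) (hcop : IsCoprime A B)
    (hA : ¬ IsUnit A) (hB : ¬ IsUnit B) :
    ∃ a b : Polynomial ℤ_[p], a.Monic ∧ b.Monic ∧ f = a * b ∧
      0 < a.natDegree ∧ 0 < b.natDegree := by
  classical
  obtain ⟨u, v, huv⟩ := hcop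
  obtain ⟨w, hw⟩ := Polynomial.map_surjective _ (toZMod_surjective p) (v * B)
  have hAne : A ≠ 0 := by
    rintro rfl
    have := (hf.map (PadicInt.toZMod (p := p))).ne_zero
    rw [hAB, zero_mul] at this
    exact this rfl
  set e₀ : AdjoinRoot f := AdjoinRoot.mk f w with he₀def
  have hvB : (v*B)^2 - (v*B) = (-(u*v)) * (A*B) := by linear_combination (v*B)*huv
  have he₀ : e₀^2 - e₀ ∈ Ideal.span {(p : AdjoinRoot f)} := by
    rw [← ker_red f, RingHom.mem_ker]
    rw [map_sub, map_pow, he₀def, red_mk, ← map_pow, ← map_sub, ← Polynomial.map_pow,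
      ← Polynomial.map_sub]
    have : (w^2 - w).map (PadicInt.toZMod (p := p)) =
        (-(u*v)) * (f.map (PadicInt.toZMod (p := p))) := by
      rw [Polynomial.map_sub, Polynomial.map_pow, hw, hAB]
      exact hvB
    rw [this, map_mul, AdjoinRoot.mk_self, mul_zero]
  obtain ⟨e, he2, hee₀⟩ := exists_idem f hf e₀ he₀
  have hredd : red f e = red f e₀ := by
    have : red f (e - e₀) = 0 := by
      rw [← RingHom.mem_ker, ker_red]; exact hee₀
    rw [map_sub, sub_eq_zero] at this
    exact this
  have hrede : red f e = AdjoinRoot.mk _ (v*B) := by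
    rw [hredd, he₀def, red_mk, hw]
  have he_ne0 : e ≠ 0 := by
    intro h0
    have h1 : AdjoinRoot.mk (f.map (PadicInt.toZMod (p := p))) (v*B) = 0 := by
      rw [← hrede, h0, map_zero]
    rw [AdjoinRoot.mk_eq_zero, hAB] at h1
    have hAdvd : A ∣ v*B := dvd_trans (dvd_mul_right A B) h1
    exact hA (isUnit_of_dvd_one (by
      rw [← huv]; exact dvd_add (Dvd.intro_left u rfl) hAdvd))
  have he_ne1 : e ≠ 1 := by
    intro h1
    have h2 : AdjoinRoot.mk (f.map (PadicInt.toZMod (p := p))) (v*B - 1) = 0 := by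
      rw [map_sub, ← hrede, h1, map_one, map_one, sub_self]
    rw [AdjoinRoot.mk_eq_zero, hAB] at h2
    have hvB1 : v*B - 1 = -(u*A) := by linear_combination huv
    rw [hvB1, dvd_neg] at h2
    obtain ⟨t, ht⟩ := h2
    have hu : u = B*t := by
      have hcan : A * u = A * (B*t) := by linear_combination ht
      exact mul_left_cancel₀ hAne hcan
    refine hB (isUnit_of_dvd_one ⟨t*A + v, ?_⟩)
    rw [← huv, hu]; ring
  obtain ⟨a, ha_mon, ha_deg, ha_ann⟩ := charpoly_piece f hf e
  obtain ⟨b, hb_mon, hb_deg, hb_ann⟩ := charpoly_piece f hf (1 - e)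
  have hdeg_sum : a.natDegree + b.natDegree = f.natDegree := by
    rw [ha_deg, hb_deg]
    exact finrank_sum_idem f hf e he2
  have hdvd : f ∣ a * b := by
    rw [← AdjoinRoot.mk_eq_zero, ← AdjoinRoot.aeval_eq, map_mul]
    linear_combination (Polynomial.aeval (AdjoinRoot.root f) b) * ha_ann +
      (Polynomial.aeval (AdjoinRoot.root f) a) * hb_ann
  have hab_mon : (a * b).Monic := ha_mon.mul hb_mon
  have hfab : f = a * b := by
    obtain ⟨c, hc⟩ := hdvd
    have hcne : c ≠ 0 := by
      rintro rfl
      rw [mul_zero] at hc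
      exact hab_mon.ne_zero hc
    have hdegc : c.natDegree = 0 := by
      have h4 := Polynomial.natDegree_mul hf.ne_zero hcne
      rw [← hc] at h4
      have h3 : (a*b).natDegree = a.natDegree + b.natDegree :=
        Polynomial.natDegree_mul ha_mon.ne_zero hb_mon.ne_zero
      omega
    have hclead : c.leadingCoeff = 1 := by
      have := hab_mon
      rw [hc] at this
      have h2 : (f * c).leadingCoeff = f.leadingCoeff * c.leadingCoeff :=
        Polynomial.leadingCoeff_mul f c
      rw [Polynomial.Monic.def.mp this, hf.leadingCoeff, one_mul] at h2
      exact h2.symm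
    have hc1 : c = 1 := by
      rw [Polynomial.eq_C_of_natDegree_eq_zero hdegc]
      rw [Polynomial.eq_C_of_natDegree_eq_zero hdegc] at hclead
      simp only [Polynomial.leadingCoeff_C] at hclead
      rw [hclead]; simp
    rw [hc, hc1, mul_one]
  have ha_pos : 0 < a.natDegree := by
    rcases Nat.eq_zero_or_pos a.natDegree with h | h
    swap
    · exact h
    · exfalso
      have : a = 1 := ha_mon.natDegree_eq_zero.mp h
      rw [this, map_one, one_mul] at ha_ann
      exact he_ne0 ha_ann
  have hb_pos : 0 < b.natDegree := by
    rcases Nat.eq_zero_or_pos b.natDegree with h | h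
    swap
    · exact h
    · exfalso
      have : b = 1 := hb_mon.natDegree_eq_zero.mp h
      rw [this, map_one, one_mul] at hb_ann
      have : e = 1 := by linear_combination -hb_ann
      exact he_ne1 this
  exact ⟨a, b, ha_mon, hb_mon, hfab, ha_pos, hb_pos⟩


lemma exists_factorization : ∀ (d : ℕ) (f : Polynomial ℤ_[p]), f.natDegree ≤ d → f.Monic →
    Squarefree (f.map (PadicInt.toZMod (p := p))) →
    ∃ s : Multiset (Polynomial ℤ_[p]),
      (∀ g ∈ s, g.Monic ∧ Irreducible (g.map (PadicInt.toZMod (p := p)))) ∧ f = s.prod := by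
  classical
  intro d
  induction d with
  | zero =>
      intro f hdeg hf _
      have : f = 1 := hf.natDegree_eq_zero.mp (Nat.le_zero.mp hdeg)
      exact ⟨0, by simp, by simp [this]⟩
  | succ d ih =>
      intro f hdeg hf hsq
      by_cases hirr : Irreducible (f.map (PadicInt.toZMod (p := p)))
      · exact ⟨{f}, by
          intro g hg
          rw [Multiset.mem_singleton] at hg
          rw [hg]
          exact ⟨hf, hirr⟩, by simp⟩
      by_cases hunit : IsUnit (f.map (PadicInt.toZMod (p := p)))
      · have h0 : f.natDegree = 0 := by
          rw [← hf.natDegree_map (PadicInt.toZMod (p := p))]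
          exact Polynomial.natDegree_eq_zero_of_isUnit hunit
        have : f = 1 := hf.natDegree_eq_zero.mp h0
        exact ⟨0, by simp, by simp [this]⟩
      · obtain ⟨A, B, hAB, hA, hB⟩ : ∃ A B : Polynomial (ZMod p),
            f.map (PadicInt.toZMod (p := p)) = A * B ∧ ¬ IsUnit A ∧ ¬ IsUnit B := by
          rw [irreducible_iff] at hirr
          push_neg at hirr
          obtain ⟨A, B, h1, h2, h3⟩ := hirr hunit
          exact ⟨A, B, h1, h2, h3⟩
        have hcop : IsCoprime A B := by
          rw [← EuclideanDomain.gcd_isUnit_iff]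
          apply hsq
          calc EuclideanDomain.gcd A B * EuclideanDomain.gcd A B
              ∣ A * B := mul_dvd_mul (EuclideanDomain.gcd_dvd_left A B)
                (EuclideanDomain.gcd_dvd_right A B)
            _ = f.map (PadicInt.toZMod (p := p)) := hAB.symm
        obtain ⟨a, b, ha_mon, hb_mon, hfab, ha_pos, hb_pos⟩ :=
          lift_factor f hf hAB hcop hA hB
        have hmap : f.map (PadicInt.toZMod (p := p)) =
            (a.map (PadicInt.toZMod (p := p))) * (b.map (PadicInt.toZMod (p := p))) := by
          rw [hfab, Polynomial.map_mul]
        have hsa : Squarefree (a.map (PadicInt.toZMod (p := p))) :=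
          hsq.squarefree_of_dvd ⟨b.map (PadicInt.toZMod (p := p)), hmap⟩
        have hsb : Squarefree (b.map (PadicInt.toZMod (p := p))) :=
          hsq.squarefree_of_dvd ⟨a.map (PadicInt.toZMod (p := p)), by rw [hmap]; ring⟩
        have hdegs : a.natDegree + b.natDegree = f.natDegree := by
          rw [hfab]
          exact (Polynomial.natDegree_mul ha_mon.ne_zero hb_mon.ne_zero).symm
        obtain ⟨sa, hsa1, hsa2⟩ := ih a (by omega) ha_mon hsa
        obtain ⟨sb, hsb1, hsb2⟩ := ih b (by omega) hb_mon hsb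
        refine ⟨sa + sb, ?_, ?_⟩
        · intro g hg
          rcases Multiset.mem_add.mp hg with h | h
          · exact hsa1 g h
          · exact hsb1 g h
        · rw [hfab, hsa2, hsb2, Multiset.prod_add]


section XnSubOne
variable (p) (n : ℕ)

lemma monic_xn_sub_one (hn : 0 < n) : (X^n - 1 : Polynomial ℤ_[p]).Monic := by
  have := Polynomial.monic_X_pow_sub_C (1 : ℤ_[p]) hn.ne'
  simpa using this

lemma map_xn_sub_one : (X^n - 1 : Polynomial ℤ_[p]).map (PadicInt.toZMod (p := p)) =
    (X^n - 1 : Polynomial (ZMod p)) := by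
  simp

lemma squarefree_xn_sub_one (hpn : ¬ p ∣ n) : Squarefree (X^n - 1 : Polynomial (ZMod p)) := by
  have hn0 : ((n : ZMod p)) ≠ 0 := by
    rw [Ne, ZMod.natCast_eq_zero_iff]
    exact hpn
  have := Polynomial.separable_X_pow_sub_C (1 : ZMod p) hn0 one_ne_zero
  have := this.squarefree
  simpa using this

lemma xn_factorization (hn : 0 < n) (hpn : ¬ p ∣ n) : ∃ s : Multiset (Polynomial ℤ_[p]),
    (∀ g ∈ s, g.Monic ∧ g ∣ (X^n - 1 : Polynomial ℤ_[p]) ∧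
      Irreducible (g.map (PadicInt.toZMod (p := p)))) ∧
    (X^n - 1 : Polynomial ℤ_[p]) = s.prod := by
  obtain ⟨s, hs1, hs2⟩ := exists_factorization (X^n - 1 : Polynomial ℤ_[p]).natDegree
    (X^n - 1) le_rfl (monic_xn_sub_one p n hn)
    (by rw [map_xn_sub_one]; exact squarefree_xn_sub_one p n hpn)
  refine ⟨s, fun g hg => ⟨(hs1 g hg).1, ?_, (hs1 g hg).2⟩, hs2⟩
  rw [hs2]
  exact Multiset.dvd_prod hg

end XnSubOne

section RingTheory
variable {n : ℕ}

/-- basic irreducible divisor, unbundled -/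
lemma span_singleton_isPrime {h : Polynomial ℤ_[p]} (hmon : h.Monic)
    (hirr : Irreducible (h.map (PadicInt.toZMod (p := p)))) :
    (Ideal.span {h} : Ideal (Polynomial ℤ_[p])).IsPrime := by
  have hirr' : Irreducible h := Polynomial.Monic.irreducible_of_irreducible_map _ h hmon hirr
  rw [Ideal.span_singleton_prime hmon.ne_zero]
  exact UniqueFactorizationMonoid.irreducible_iff_prime.mp hirr'

lemma C_p_not_mem_span {h : Polynomial ℤ_[p]} (hmon : h.Monic)
    (hirr : Irreducible (h.map (PadicInt.toZMod (p := p)))) :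
    C (p : ℤ_[p]) ∉ (Ideal.span {h} : Ideal (Polynomial ℤ_[p])) := by
  intro hmem
  rw [Ideal.mem_span_singleton] at hmem
  have hCp : (C (p : ℤ_[p])) ≠ 0 := by
    simp only [Ne, Polynomial.C_eq_zero]
    exact_mod_cast (Fact.out : p.Prime).ne_zero
  have hle := Polynomial.natDegree_le_of_dvd hmem hCp
  rw [Polynomial.natDegree_C] at hle
  have hpos : 0 < h.natDegree := by
    rw [← hmon.natDegree_map (PadicInt.toZMod (p := p))]
    exact hirr.natDegree_pos
  omega

lemma span_pair_isMaximal {h : Polynomial ℤ_[p]} (hmon : h.Monic)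
    (hirr : Irreducible (h.map (PadicInt.toZMod (p := p)))) :
    (Ideal.span {h, C (p : ℤ_[p])} : Ideal (Polynomial ℤ_[p])).IsMaximal := by
  classical
  letI : (Ideal.span {h.map (PadicInt.toZMod (p := p))} :
      Ideal (Polynomial (ZMod p))).IsMaximal :=
    PrincipalIdealRing.isMaximal_of_irreducible hirr
  letI : Field (Polynomial (ZMod p) ⧸ Ideal.span {h.map (PadicInt.toZMod (p := p))}) :=
    Ideal.Quotient.field _
  set ψ : Polynomial ℤ_[p] →+*
      (Polynomial (ZMod p) ⧸ Ideal.span {h.map (PadicInt.toZMod (p := p))}) :=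
    (Ideal.Quotient.mk _).comp (Polynomial.mapRingHom (PadicInt.toZMod (p := p))) with hψ
  have hsurj : Function.Surjective ψ := by
    apply Function.Surjective.comp Ideal.Quotient.mk_surjective
    exact Polynomial.map_surjective _ (toZMod_surjective p)
  have hker : RingHom.ker ψ = Ideal.span {h, C (p : ℤ_[p])} := by
    ext g
    rw [RingHom.mem_ker, hψ, RingHom.comp_apply, Polynomial.coe_mapRingHom,
      Ideal.Quotient.eq_zero_iff_mem, Ideal.mem_span_singleton]
    constructor
    · rintro ⟨cb, hcb⟩
      obtain ⟨c, rfl⟩ := Polynomial.map_surjective _ (toZMod_surjective p) cb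
      have h0 : (g - h * c).map (PadicInt.toZMod (p := p)) = 0 := by
        rw [Polynomial.map_sub, Polynomial.map_mul, hcb]; ring
      rw [map_eq_zero_iff_C_dvd] at h0
      obtain ⟨d, hd⟩ := h0
      have : g = h * c + C (p : ℤ_[p]) * d := by rw [← hd]; ring
      rw [this]
      exact Ideal.add_mem _
        (Ideal.mul_mem_right _ _ (Ideal.subset_span (by simp)))
        (Ideal.mul_mem_right _ _ (Ideal.subset_span (by simp)))
    · intro hg
      rw [Ideal.mem_span_pair] at hg
      obtain ⟨a, b, hab⟩ := hg
      rw [← hab]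
      refine ⟨(a.map (PadicInt.toZMod (p := p))), ?_⟩
      have hCp0 : (C (p : ℤ_[p])).map (PadicInt.toZMod (p := p)) = 0 := by
        rw [Polynomial.map_C]
        have : PadicInt.toZMod ((p : ℕ) : ℤ_[p]) = 0 := by
          rw [toZMod_eq_zero_iff]
        rw [this, Polynomial.C_0]
      rw [Polynomial.map_add, Polynomial.map_mul, Polynomial.map_mul, hCp0,
        mul_zero, add_zero, mul_comm]
  rw [← hker]
  exact RingHom.ker_isMaximal_of_surjective ψ hsurj

end RingTheory


section Classify

/-- If `Q` is a prime not containing `C p` but containing the basic irreducible `h`,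
then `Q = span {h}`. -/
lemma prime_eq_span_singleton {h : Polynomial ℤ_[p]} (hmon : h.Monic)
    (hirr : Irreducible (h.map (PadicInt.toZMod (p := p))))
    (Q : Ideal (Polynomial ℤ_[p])) (hQ : Q.IsPrime)
    (hhQ : h ∈ Q) (hpQ : C (p : ℤ_[p]) ∉ Q) :
    Q = Ideal.span {h} := by
  classical
  refine le_antisymm ?_ (by rwa [Ideal.span_le, Set.singleton_subset_iff])
  intro g hg
  rw [Ideal.mem_span_singleton]
  by_contra hdvd
  letI : (Ideal.span {h} : Ideal (Polynomial ℤ_[p])).IsPrime :=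
    span_singleton_isPrime hmon hirr
  letI : IsDomain (AdjoinRoot h) :=
    Ideal.Quotient.isDomain (Ideal.span {h} : Ideal (Polynomial ℤ_[p]))
  haveI : Module.Finite ℤ_[p] (AdjoinRoot h) := (AdjoinRoot.powerBasis' hmon).finite
  set F : Polynomial ℤ_[p] →ₐ[ℤ_[p]] AdjoinRoot h :=
    { AdjoinRoot.mk h with commutes' := fun r => rfl } with hF
  have hFg : ∀ q, F q = AdjoinRoot.mk h q := fun q => rfl
  set z : AdjoinRoot h := AdjoinRoot.mk h g with hz
  have hzne : z ≠ 0 := by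
    rw [hz, Ne, AdjoinRoot.mk_eq_zero]
    exact hdvd
  have hint : IsIntegral ℤ_[p] z := IsIntegral.of_finite ℤ_[p] z
  set m := minpoly ℤ_[p] z with hm
  have hmmon : m.Monic := minpoly.monic hint
  have haeval : Polynomial.aeval z m = 0 := minpoly.aeval ℤ_[p] z
  have hc0 : m.coeff 0 ≠ 0 := by
    intro hc
    have hmX : m = m.divX * X := by
      conv_lhs => rw [← Polynomial.X_mul_divX_add m]
      rw [hc, Polynomial.C_0, add_zero, mul_comm]
    have hdivmon : m.divX.Monic := by
      have := hmmon
      rw [Polynomial.Monic, hmX, Polynomial.leadingCoeff_mul_X] at this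
      exact this
    have haeval' : Polynomial.aeval z m.divX = 0 := by
      have h5 : Polynomial.aeval z (m.divX * X) = 0 := by rw [← hmX]; exact haeval
      rw [map_mul, Polynomial.aeval_X] at h5
      rcases mul_eq_zero.mp h5 with h1 | h1
      · exact h1
      · exact absurd h1 hzne
    have := minpoly.min ℤ_[p] z hdivmon haeval'
    have hlt : m.divX.degree < m.degree :=
      Polynomial.degree_divX_lt (hmmon.ne_zero)
    rw [← hm] at this
    exact absurd this (not_le_of_gt hlt)
  have hQm : Polynomial.aeval g m ∈ Q := by
    have hFm : F (Polynomial.aeval g m) = 0 := by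
      rw [← Polynomial.aeval_algHom_apply]
      exact haeval
    rw [hFg, AdjoinRoot.mk_eq_zero] at hFm
    exact Ideal.mem_span_singleton.mpr hFm |> fun hx =>
      (Ideal.span_le.mpr (Set.singleton_subset_iff.mpr hhQ)) hx
  have hCc : C (m.coeff 0) ∈ Q := by
    have hsplit : Polynomial.aeval g m =
        g * Polynomial.aeval g m.divX + C (m.coeff 0) := by
      conv_lhs => rw [← Polynomial.X_mul_divX_add m]
      rw [map_add, map_mul, Polynomial.aeval_X, Polynomial.aeval_C,
        Polynomial.algebraMap_eq]
    have : C (m.coeff 0) = Polynomial.aeval g m - g * Polynomial.aeval g m.divX := by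
      rw [hsplit]; ring
    rw [this]
    exact Ideal.sub_mem _ hQm (Ideal.mul_mem_right _ _ hg)
  set J : Ideal ℤ_[p] := Q.comap (Polynomial.C : ℤ_[p] →+* Polynomial ℤ_[p]) with hJ
  haveI hJprime : J.IsPrime := Ideal.IsPrime.comap _
  have hcJ : m.coeff 0 ∈ J := by
    rw [hJ, Ideal.mem_comap]
    exact hCc
  have hJne : J ≠ ⊥ := by
    intro hbot
    rw [hbot, Ideal.mem_bot] at hcJ
    exact hc0 hcJ
  have hJmax : J.IsMaximal := IsPrime.to_maximal_ideal hJne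
  have hJeq : J = IsLocalRing.maximalIdeal ℤ_[p] := IsLocalRing.eq_maximalIdeal hJmax
  have hpJ : (p : ℤ_[p]) ∈ J := by
    rw [hJeq, PadicInt.maximalIdeal_eq_span_p]
    exact Ideal.subset_span rfl
  rw [hJ, Ideal.mem_comap] at hpJ
  exact hpQ hpJ


lemma classify_prime (n : ℕ) (hn : 0 < n) (hpn : ¬ p ∣ n)
    (Q : Ideal (Polynomial ℤ_[p])) (hQ : Q.IsPrime)
    (hX : (X^n - 1 : Polynomial ℤ_[p]) ∈ Q) :
    ∃ h : Polynomial ℤ_[p],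
      (h.Monic ∧ h ∣ (X^n - 1) ∧ Irreducible (h.map (PadicInt.toZMod (p := p)))) ∧
      (Q = Ideal.span {h} ∨ Q = Ideal.span {h, C (p : ℤ_[p])}) := by
  obtain ⟨s, hs1, hs2⟩ := xn_factorization p n hn hpn
  have hprod : s.prod ∈ Q := by rw [← hs2]; exact hX
  obtain ⟨h, hhs, hhQ⟩ := (hQ.multiset_prod_mem_iff_exists_mem s).mp hprod
  obtain ⟨hmon, hdvd, hirr⟩ := hs1 h hhs
  refine ⟨h, ⟨hmon, hdvd, hirr⟩, ?_⟩
  by_cases hp : C (p : ℤ_[p]) ∈ Q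
  · right
    have hle : Ideal.span {h, C (p : ℤ_[p])} ≤ Q := by
      rw [Ideal.span_le, Set.insert_subset_iff, Set.singleton_subset_iff]
      exact ⟨hhQ, hp⟩
    exact ((span_pair_isMaximal hmon hirr).eq_of_le hQ.ne_top hle).symm
  · left
    exact prime_eq_span_singleton hmon hirr Q hQ hhQ hp

lemma classify_max (n : ℕ) (hn : 0 < n) (hpn : ¬ p ∣ n)
    (Q : Ideal (Polynomial ℤ_[p])) (hQ : Q.IsMaximal)
    (hX : (X^n - 1 : Polynomial ℤ_[p]) ∈ Q) :
    ∃ h : Polynomial ℤ_[p],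
      (h.Monic ∧ h ∣ (X^n - 1) ∧ Irreducible (h.map (PadicInt.toZMod (p := p)))) ∧
      Q = Ideal.span {h, C (p : ℤ_[p])} := by
  obtain ⟨h, hb, hcase⟩ := classify_prime n hn hpn Q hQ.isPrime hX
  rcases hcase with h1 | h1
  · exfalso
    have hlt : Q < Ideal.span {h, C (p : ℤ_[p])} := by
      rw [h1]
      refine lt_of_le_of_ne (Ideal.span_mono (Set.singleton_subset_iff.mpr (by simp))) ?_
      intro heq
      exact C_p_not_mem_span hb.1 hb.2.2 (heq ▸ Ideal.subset_span (by simp))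
    exact (span_pair_isMaximal hb.1 hb.2.2).ne_top (hQ.out.2 _ hlt)
  · exact ⟨h, hb, h1⟩

end Classify

end Stmt3Aux


open Stmt3Aux in
theorem stmt3 (p : ℕ) [Fact p.Prime] (n : ℕ) (hn : 0 < n) (hpn : ¬ p ∣ n)
    (P : Ideal (RquotP p n)) :
    (P.IsPrime ↔ ∃ h : Polynomial ℤ_[p], BasicIrrP p n h ∧
        (P = Ideal.span {pmk p n h} ∨
          P = Ideal.span {pmk p n h, pmk p n (C (p : ℤ_[p]))})) ∧
    (P.IsMaximal ↔ ∃ h : Polynomial ℤ_[p], BasicIrrP p n h ∧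
        P = Ideal.span {pmk p n h, pmk p n (C (p : ℤ_[p]))}) := by
  classical
  have hsurj : Function.Surjective (pmk p n) := Ideal.Quotient.mk_surjective
  have hker : RingHom.ker (pmk p n) = Ideal.span {(X : Polynomial ℤ_[p]) ^ n - 1} :=
    Ideal.mk_ker
  have hmap1 : ∀ h : Polynomial ℤ_[p],
      Ideal.map (pmk p n) (Ideal.span {h}) = Ideal.span {pmk p n h} := by
    intro h; rw [Ideal.map_span, Set.image_singleton]
  have hmap2 : ∀ h : Polynomial ℤ_[p],
      Ideal.map (pmk p n) (Ideal.span {h, C (p : ℤ_[p])}) =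
        Ideal.span {pmk p n h, pmk p n (C (p : ℤ_[p]))} := by
    intro h; rw [Ideal.map_span, Set.image_insert_eq, Set.image_singleton]
  have hXQ : ∀ (Q : Ideal (RquotP p n)),
      (X ^ n - 1 : Polynomial ℤ_[p]) ∈ Ideal.comap (pmk p n) Q := by
    intro Q
    rw [Ideal.mem_comap]
    have h0 : pmk p n ((X : Polynomial ℤ_[p]) ^ n - 1) = 0 := by
      rw [Ideal.Quotient.eq_zero_iff_mem]; exact Ideal.subset_span rfl
    rw [h0]; exact Q.zero_mem
  have hkerle : ∀ {h : Polynomial ℤ_[p]}, h ∣ ((X : Polynomial ℤ_[p]) ^ n - 1) →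
      RingHom.ker (pmk p n) ≤ Ideal.span {h} := by
    intro h hdvd
    rw [hker, Ideal.span_le, Set.singleton_subset_iff]
    exact Ideal.mem_span_singleton.mpr hdvd
  have hkerle2 : ∀ {h : Polynomial ℤ_[p]}, h ∣ ((X : Polynomial ℤ_[p]) ^ n - 1) →
      RingHom.ker (pmk p n) ≤ Ideal.span {h, C (p : ℤ_[p])} := fun hdvd =>
    le_trans (hkerle hdvd) (Ideal.span_mono (Set.singleton_subset_iff.mpr (by simp)))
  have hmapmax : ∀ {Q : Ideal (Polynomial ℤ_[p])}, Q.IsMaximal →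
      RingHom.ker (pmk p n) ≤ Q → (Ideal.map (pmk p n) Q).IsMaximal := by
    intro Q hQM hle
    rcases Ideal.map_eq_top_or_isMaximal_of_surjective _ hsurj hQM with htop | hmax
    · exfalso
      have hcm := Ideal.comap_map_of_surjective _ hsurj Q
      rw [htop, Ideal.comap_top] at hcm
      have hcb : Ideal.comap (pmk p n) ⊥ = RingHom.ker (pmk p n) := rfl
      rw [hcb, sup_eq_left.mpr hle] at hcm
      exact hQM.ne_top hcm.symm
    · exact hmax
  constructor
  · constructor
    · intro hP
      haveI := hP
      have hQp : (Ideal.comap (pmk p n) P).IsPrime := Ideal.IsPrime.comap _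
      obtain ⟨h, hb, hcase⟩ := classify_prime n hn hpn _ hQp (hXQ P)
      refine ⟨h, ⟨hb.1, hb.2.1, hb.2.2⟩, ?_⟩
      have hPmap : Ideal.map (pmk p n) (Ideal.comap (pmk p n) P) = P :=
        Ideal.map_comap_of_surjective _ hsurj P
      rcases hcase with h1 | h1
      · left; rw [← hPmap, h1, hmap1]
      · right; rw [← hPmap, h1, hmap2]
    · rintro ⟨h, hb, hcase | hcase⟩
      obtain ⟨hmon, hdvd, hirr⟩ := hb
      · rw [hcase, ← hmap1]
        letI := span_singleton_isPrime hmon hirr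
        exact Ideal.map_isPrime_of_surjective hsurj (hkerle hdvd)
      · obtain ⟨hmon, hdvd, hirr⟩ := hb
        rw [hcase, ← hmap2]
        exact (hmapmax (span_pair_isMaximal hmon hirr) (hkerle2 hdvd)).isPrime
  · constructor
    · intro hP
      haveI := hP
      have hQm : (Ideal.comap (pmk p n) P).IsMaximal :=
        Ideal.comap_isMaximal_of_surjective _ hsurj
      obtain ⟨h, hb, h1⟩ := classify_max n hn hpn _ hQm (hXQ P)
      refine ⟨h, ⟨hb.1, hb.2.1, hb.2.2⟩, ?_⟩
      rw [← Ideal.map_comap_of_surjective _ hsurj P, h1, hmap2]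
    · rintro ⟨h, hb, hcase⟩
      obtain ⟨hmon, hdvd, hirr⟩ := hb
      rw [hcase, ← hmap2]
      exact hmapmax (span_pair_isMaximal hmon hirr) (hkerle2 hdvd)
end

section
/- For every basic irreducible divisor h of X^n − 1 over ZMod p^a, there exists an element e ∈ R_a with e² = e such that the ideal of R_a generated by e and the image of the constant polynomial p equals the ideal generated by h̄ and the image of p. -/
open Polynomial

theorem stmt4 (p : ℕ) [Fact p.Prime] (a n : ℕ) (ha : 0 < a) (hn : 0 < n) (hpn : ¬ p ∣ n)
    (h : Polynomial (ZMod (p ^ a))) (hh : BasicIrr p a n ha.ne' h) :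
    ∃ e : Rquot p a n, e ^ 2 = e ∧
      Ideal.span {e, rmk p a n (C (p : ZMod (p ^ a)))} =
        Ideal.span {rmk p a n h, rmk p a n (C (p : ZMod (p ^ a)))} := by
  classical
  obtain ⟨hmon, hdvd, hirr⟩ := hh
  obtain ⟨g, hg⟩ := hdvd
  set φ : ZMod (p ^ a) →+* ZMod p := ZMod.castHom (dvd_pow_self p ha.ne') (ZMod p)
  have hφs : Function.Surjective φ := ZMod.ringHom_surjective φ
  -- X^n - 1 is squarefree over ZMod p
  have hn0 : (n : ZMod p) ≠ 0 := by
    simpa [ZMod.natCast_eq_zero_iff] using hpn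
  have hsq : Squarefree ((X : Polynomial (ZMod p)) ^ n - 1) :=
    (Polynomial.X_pow_sub_one_separable_iff.mpr hn0).squarefree
  have hmapXn : ((X : Polynomial (ZMod (p ^ a))) ^ n - 1).map φ =
      (X : Polynomial (ZMod p)) ^ n - 1 := by
    simp [Polynomial.map_sub, Polynomial.map_pow]
  -- h mod p does not divide g mod p
  have hnd : ¬ (h.map φ ∣ g.map φ) := by
    intro ⟨c, hc⟩
    refine hirr.not_isUnit (hsq (h.map φ) ?_)
    refine ⟨c, ?_⟩
    rw [← hmapXn, hg, Polynomial.map_mul, hc]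
    ring
  have hcop : IsCoprime (h.map φ) (g.map φ) := hirr.coprime_iff_not_dvd.mpr hnd
  obtain ⟨u', v', huv⟩ := hcop
  obtain ⟨u, rfl⟩ := Polynomial.map_surjective φ hφs u'
  obtain ⟨v, rfl⟩ := Polynomial.map_surjective φ hφs v'
  -- every element of ker φ is nilpotent
  have hker : ∀ c : ZMod (p ^ a), φ c = 0 → IsNilpotent c := by
    intro c hc
    haveI : NeZero (p ^ a) := ⟨pow_ne_zero a (Nat.Prime.ne_zero Fact.out)⟩
    have : (p : ℕ) ∣ c.val := by
      have h2 : ((c.val : ℕ) : ZMod p) = 0 := by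
        rw [ZMod.natCast_val, ← ZMod.castHom_apply (h := dvd_pow_self p ha.ne')]
        exact hc
      exact (ZMod.natCast_eq_zero_iff _ _).mp h2
    obtain ⟨m, hm⟩ := this
    refine ⟨a, ?_⟩
    have hc' : c = (p : ZMod (p ^ a)) * (m : ZMod (p ^ a)) := by
      have := ZMod.natCast_zmod_val c
      rw [← this, hm]
      push_cast
      ring
    rw [hc', mul_pow, ← Nat.cast_pow, ZMod.natCast_self, zero_mul]
  -- u * h + v * g is a unit
  have hwmap : (u * h + v * g - 1).map φ = 0 := by
    rw [Polynomial.map_sub, Polynomial.map_add, Polynomial.map_mul, Polynomial.map_mul,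
      Polynomial.map_one]
    rw [sub_eq_zero, huv]
  have hwu : IsUnit (u * h + v * g) := by
    set w := u * h + v * g - 1 with hw
    have hcoeff : ∀ i, IsNilpotent (w.coeff i) := by
      intro i
      apply hker
      have : (w.map φ).coeff i = 0 := by rw [hwmap]; simp
      rwa [Polynomial.coeff_map] at this
    have : u * h + v * g = 1 + w := by rw [hw]; ring
    rw [this]
    apply Polynomial.isUnit_of_coeff_isUnit_isNilpotent
    · simpa using (hcoeff 0).isUnit_one_add
    · intro i hi
      simpa [Polynomial.coeff_one, hi] using hcoeff i
  obtain ⟨cu, hcu⟩ := hwu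
  -- pass to the quotient
  set π := rmk p a n
  have hz : π h * π g = 0 := by
    rw [← map_mul, ← hg, Ideal.Quotient.eq_zero_iff_mem]
    exact Ideal.subset_span rfl
  have hinv : π ((↑cu⁻¹ : Polynomial (ZMod (p ^ a)))) * π (u * h + v * g) = 1 := by
    rw [← map_mul, ← hcu, ← map_one π]
    congr 1
    simp
  set t := π (↑cu⁻¹ : Polynomial (ZMod (p ^ a))) * π u
  set s := π (↑cu⁻¹ : Polynomial (ZMod (p ^ a))) * π v
  set e := t * π h with he
  have key : e + s * π g = 1 := by
    rw [← hinv]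
    push_cast [map_add, map_mul]
    ring
  refine ⟨e, ?_, ?_⟩
  · linear_combination e * key + (-(t * s)) * hz
  · apply le_antisymm <;> rw [Ideal.span_le] <;> rintro x hx <;>
      simp only [Set.mem_insert_iff, Set.mem_singleton_iff] at hx
    · rcases hx with rfl | rfl
      · rw [he]
        exact Ideal.mul_mem_left _ t (Ideal.subset_span (by simp))
      · exact Ideal.subset_span (by simp)
    · rcases hx with rfl | rfl
      · have : π h = π h * e := by
          have := congrArg (fun z => π h * z) key
          simp only [mul_add, mul_one] at this
          calc π h = π h * e + π h * (s * π g) := this.symm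
            _ = π h * e + s * (π h * π g) := by ring
            _ = π h * e := by rw [hz]; ring
        rw [this]
        exact Ideal.mul_mem_left _ (π h) (Ideal.subset_span (by simp))
      · exact Ideal.subset_span (by simp)
end

section
/- For every basic irreducible divisor h of X^n − 1 over ℤ_p, the principal ideal of R_∞ generated by h̄ has an idempotent generator: there exists e ∈ R_∞ with e² = e such that the ideal generated by e equals the ideal generated by h̄. -/
open Polynomial

theorem stmt5 (p : ℕ) [Fact p.Prime] (n : ℕ) (hn : 0 < n) (hpn : ¬ p ∣ n)
    (h : Polynomial ℤ_[p]) (hh : BasicIrrP p n h) :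
    ∃ e : RquotP p n, e ^ 2 = e ∧ Ideal.span {e} = Ideal.span {pmk p n h} := by
  obtain ⟨hmon, hdvd, hirr⟩ := hh
  obtain ⟨g, hg⟩ := hdvd
  set φ := (PadicInt.toZMod (p := p)) with hφ
  -- squarefreeness of X^n - 1 mod p
  have hsq : Squarefree ((X ^ n - 1 : Polynomial ℤ_[p]).map φ) := by
    rw [Polynomial.map_sub, Polynomial.map_pow, map_X, Polynomial.map_one]
    have hsep : ((X : (ZMod p)[X]) ^ n - C 1).Separable :=
      Polynomial.separable_X_pow_sub_C 1
        (by simpa [Ne, ZMod.natCast_eq_zero_iff] using hpn) one_ne_zero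
    simpa using hsep.squarefree
  have hnotdvd : ¬ (h.map φ) ∣ (g.map φ) := by
    intro hd
    have h2 : (h.map φ) * (h.map φ) ∣ ((X ^ n - 1 : Polynomial ℤ_[p]).map φ) := by
      rw [hg, Polynomial.map_mul]
      exact mul_dvd_mul_left _ hd
    exact hirr.not_isUnit (hsq _ h2)
  have hcop : IsCoprime (h.map φ) (g.map φ) := hirr.coprime_iff_not_dvd.mpr hnotdvd
  obtain ⟨a0, b0, hab0⟩ := hcop
  -- lift the Bezout combination
  have hsurjφ : Function.Surjective φ := fun z =>
    ⟨((z.val : ℕ) : ℤ_[p]), by rw [map_natCast]; exact ZMod.natCast_rightInverse z⟩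
  obtain ⟨a, ha⟩ := Polynomial.map_surjective φ hsurjφ a0
  obtain ⟨b, hb⟩ := Polynomial.map_surjective φ hsurjφ b0
  have hker : ∀ z : ℤ_[p], φ z = 0 → (p : ℤ_[p]) ∣ z := by
    intro z hz
    have hz' : z ∈ RingHom.ker φ := hz
    rw [hφ, PadicInt.ker_toZMod, PadicInt.maximalIdeal_eq_span_p,
      Ideal.mem_span_singleton] at hz'
    exact hz'
  have hC : (C (p : ℤ_[p])) ∣ (a * h + b * g - 1) := by
    rw [Polynomial.C_dvd_iff_dvd_coeff]
    intro i
    apply hker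
    have hmap0 : (a * h + b * g - 1).map φ = 0 := by
      rw [Polynomial.map_sub, Polynomial.map_add, Polynomial.map_mul, Polynomial.map_mul,
        ha, hb, Polynomial.map_one, hab0, sub_self]
    have hcoeff : ((a * h + b * g - 1).map φ).coeff i = 0 := by rw [hmap0]; simp
    rwa [Polynomial.coeff_map] at hcoeff
  obtain ⟨c, hcEq⟩ := hC
  -- finiteness and integrality of the quotient ring
  have hmonf : ((X : Polynomial ℤ_[p]) ^ n - 1).Monic := by
    simpa using monic_X_pow_sub_C (1 : ℤ_[p]) hn.ne'
  haveI : Module.Finite ℤ_[p] (RquotP p n) :=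
    Module.Finite.of_basis (AdjoinRoot.powerBasis' hmonf).basis
  haveI : Algebra.IsIntegral ℤ_[p] (RquotP p n) := Algebra.IsIntegral.of_finite _ _
  -- 1 + p * r is a unit in the quotient ring
  have hunit : ∀ r : RquotP p n, IsUnit (1 + (p : RquotP p n) * r) := by
    intro r
    by_contra hu
    rw [← Ideal.span_singleton_eq_top] at hu
    obtain ⟨m, hm, hle⟩ := Ideal.exists_le_maximal _ hu
    haveI := hm
    have hcomap : (m.comap (algebraMap ℤ_[p] (RquotP p n))).IsMaximal :=
      Ideal.isMaximal_comap_of_isIntegral_of_isMaximal m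
    have hpm : (p : RquotP p n) ∈ m := by
      have hp1 : (p : ℤ_[p]) ∈ m.comap (algebraMap ℤ_[p] (RquotP p n)) := by
        rw [IsLocalRing.eq_maximalIdeal hcomap, PadicInt.maximalIdeal_eq_span_p]
        exact Ideal.mem_span_singleton_self _
      have := hp1
      rw [Ideal.mem_comap] at this
      simpa using this
    have h1m : (1 : RquotP p n) ∈ m := by
      have hum : (1 + (p : RquotP p n) * r) ∈ m :=
        hle (Ideal.mem_span_singleton_self _)
      have : (1 : RquotP p n) = (1 + (p : RquotP p n) * r) - (p : RquotP p n) * r := by ring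
      rw [this]
      exact Ideal.sub_mem _ hum (Ideal.mul_mem_right _ _ hpm)
    exact hm.ne_top (Ideal.eq_top_iff_one m |>.mpr h1m)
  -- the key relation in the quotient
  have key : pmk p n a * pmk p n h + pmk p n b * pmk p n g
      = 1 + (p : RquotP p n) * pmk p n c := by
    have habg : a * h + b * g = 1 + (p : Polynomial ℤ_[p]) * c := by
      have : ((p : ℕ) : Polynomial ℤ_[p]) = C (p : ℤ_[p]) := by
        simp
      rw [this]; linear_combination hcEq
    calc pmk p n a * pmk p n h + pmk p n b * pmk p n g
        = pmk p n (a * h + b * g) := by rw [map_add, map_mul, map_mul]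
      _ = pmk p n (1 + (p : Polynomial ℤ_[p]) * c) := by rw [habg]
      _ = 1 + (p : RquotP p n) * pmk p n c := by
          rw [map_add, map_one, map_mul, map_natCast]
  obtain ⟨u, hu⟩ := hunit (pmk p n c)
  have hcopR : IsCoprime (pmk p n h) (pmk p n g) := by
    refine ⟨(↑u⁻¹ : RquotP p n) * pmk p n a, (↑u⁻¹ : RquotP p n) * pmk p n b, ?_⟩
    have : (↑u⁻¹ : RquotP p n) * (pmk p n a * pmk p n h + pmk p n b * pmk p n g) = 1 := by
      rw [key, ← hu, Units.inv_mul]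
    linear_combination this
  have hhg0 : pmk p n h * pmk p n g = 0 := by
    rw [← map_mul, ← hg]
    exact Ideal.Quotient.eq_zero_iff_mem.mpr (Ideal.mem_span_singleton_self _)
  obtain ⟨x, y, hxy⟩ := hcopR
  refine ⟨x * pmk p n h, ?_, ?_⟩
  · linear_combination (x * pmk p n h) * hxy - x * y * hhg0
  · apply le_antisymm
    · rw [Ideal.span_singleton_le_span_singleton]
      exact ⟨x, mul_comm _ _⟩
    · rw [Ideal.span_singleton_le_span_singleton]
      exact ⟨pmk p n h, by linear_combination (-(pmk p n h)) * hxy + y * hhg0⟩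
end

section
/- An ideal Q of R_a is primary if and only if there exist a basic irreducible divisor h of X^n − 1 over ZMod p^a and an integer i with 1 ≤ i ≤ a such that Q is the ideal of R_a generated by h̄ and the image of the constant polynomial p^i. (Since p^a = 0 in ZMod p^a, the case i = a gives the principal ideal generated by h̄.) -/
open Polynomial

namespace Stmt6Aux

open Ideal

set_option linter.unusedSectionVars false
set_option linter.unusedVariables false


variable {p a : ℕ} [Fact p.Prime]

/-- The reduction map `(ZMod p^a)[X] → (ZMod p)[X]`. -/
noncomputable def pr (ha : a ≠ 0) : Polynomial (ZMod (p ^ a)) →+* Polynomial (ZMod p) :=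
  mapRingHom (ZMod.castHom (dvd_pow_self p ha) (ZMod p))

lemma pr_surj (ha : a ≠ 0) : Function.Surjective (pr (p := p) ha) := by
  simpa [pr, coe_mapRingHom] using
    Polynomial.map_surjective _ (ZMod.ringHom_surjective (ZMod.castHom (dvd_pow_self p ha) (ZMod p)))

lemma mem_lifts_all (ha : a ≠ 0) (q : Polynomial (ZMod p)) :
    q ∈ lifts (ZMod.castHom (dvd_pow_self p ha) (ZMod p)) := by
  obtain ⟨r, hr⟩ := pr_surj ha q
  exact ⟨r, hr⟩

lemma zmod_dvd_iff (ha : a ≠ 0) (x : ZMod (p ^ a)) :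
    (p : ZMod (p ^ a)) ∣ x ↔ p ∣ x.val := by
  haveI : NeZero (p ^ a) := ⟨pow_ne_zero _ (Fact.out : p.Prime).ne_zero⟩
  constructor
  · rintro ⟨y, rfl⟩
    have h1 : (p : ZMod (p ^ a)) * y = ((p * y.val : ℕ) : ZMod (p ^ a)) := by
      rw [Nat.cast_mul, ZMod.natCast_zmod_val]
    rw [h1, ZMod.val_natCast, Nat.dvd_mod_iff (dvd_pow_self p ha)]
    exact Dvd.intro _ rfl
  · rintro ⟨m, hm⟩
    refine ⟨(m : ZMod (p ^ a)), ?_⟩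
    rw [← Nat.cast_mul, ← hm, ZMod.natCast_zmod_val]

lemma zmod_ker (ha : a ≠ 0) :
    RingHom.ker (ZMod.castHom (dvd_pow_self p ha) (ZMod p)) = span {(p : ZMod (p ^ a))} := by
  haveI : NeZero (p ^ a) := ⟨pow_ne_zero _ (Fact.out : p.Prime).ne_zero⟩
  ext x
  rw [RingHom.mem_ker, mem_span_singleton, zmod_dvd_iff ha]
  conv_lhs => rw [← ZMod.natCast_zmod_val x, map_natCast]
  rw [ZMod.natCast_eq_zero_iff]
lemma ker_pr (ha : a ≠ 0) :
    RingHom.ker (pr (p := p) ha) = span {C (p : ZMod (p ^ a))} := by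
  rw [pr, Polynomial.ker_mapRingHom, zmod_ker ha, Ideal.map_span, Set.image_singleton]

lemma pr_C_p (ha : a ≠ 0) : pr (p := p) ha (C (p : ZMod (p ^ a))) = 0 := by
  simp [pr]

lemma pr_f (ha : a ≠ 0) (n : ℕ) :
    pr (p := p) ha (X ^ n - 1) = X ^ n - 1 := by
  simp [pr]

lemma degree_C_mul_le' {R : Type*} [CommRing R] (x : R) (q : R[X]) :
    (C x * q).degree ≤ q.degree :=
  (degree_mul_le _ _).trans (by simpa using add_le_add_left (degree_C_le (a := x)) q.degree)

/-- truncation below degree `N`, absorbing `C x`. -/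
lemma trunc {R : Type*} [CommRing R] [Nontrivial R] (x : R) (N : ℕ) (e0 : R[X])
    (hd : (C x * e0).degree < N) :
    C x * (e0 %ₘ X ^ N) = C x * e0 ∧ (e0 %ₘ X ^ N).degree < N := by
  have hmon : (X ^ N : R[X]).Monic := monic_X_pow N
  have hlt : (e0 %ₘ X ^ N).degree < N := by
    simpa [degree_X_pow] using degree_modByMonic_lt e0 hmon
  refine ⟨?_, hlt⟩
  have hsplit : e0 %ₘ X ^ N + X ^ N * (e0 /ₘ X ^ N) = e0 := modByMonic_add_div e0 _
  have hdh : X ^ N * (e0 /ₘ X ^ N) = e0 - e0 %ₘ X ^ N := eq_sub_of_add_eq' hsplit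
  have hs : C x * e0 - C x * (e0 %ₘ X ^ N) = C x * (e0 /ₘ X ^ N) * X ^ N := by
    rw [← mul_sub, ← hdh]; ring
  have hdeg : (C x * (e0 /ₘ X ^ N) * X ^ N).degree < (N : WithBot ℕ) := by
    rw [← hs]
    exact lt_of_le_of_lt (degree_sub_le _ _)
      (max_lt hd (lt_of_le_of_lt (degree_C_mul_le' _ _) hlt))
  have hzero : C x * (e0 /ₘ X ^ N) * X ^ N = 0 := by
    ext j
    rcases lt_or_ge j N with hj | hj
    · rw [coeff_mul_X_pow', if_neg (by omega), coeff_zero]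
    · rw [coeff_eq_zero_of_degree_lt (lt_of_lt_of_le hdeg (by exact_mod_cast hj)), coeff_zero]
  exact (sub_eq_zero.mp (by rw [hs, hzero])).symm

section LocalPiece

variable {T : Type*} [CommRing T]

lemma isUnit_of_not_mem_span {t : T} (hmax : (span {t}).IsMaximal)
    (hnil : IsNilpotent t) {u : T} (hu : u ∉ span ({t} : Set T)) : IsUnit u := by
  by_contra hun
  have hne : span ({u} : Set T) ≠ ⊤ := by
    rwa [Ne, span_singleton_eq_top]
  obtain ⟨m, hm, hum⟩ := Ideal.exists_le_maximal _ hne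
  obtain ⟨c, hc⟩ := hnil
  have htm : t ∈ m := hm.isPrime.mem_of_pow_mem c (hc ▸ m.zero_mem)
  have : span ({t} : Set T) = m := hmax.eq_of_le hm.ne_top ((span_le).mpr (by simpa using htm))
  exact hu (this ▸ hum (subset_span rfl))

lemma ideal_eq_pow {t : T} {a : ℕ} (ha : 0 < a) (hta : t ^ a = 0)
    (hmax : (span {t}).IsMaximal) {J : Ideal T} (hJ : J ≤ span {t}) :
    ∃ i, 1 ≤ i ∧ i ≤ a ∧ J = span {t ^ i} := by
  classical
  set P : ℕ → Prop := fun i => J ≤ span {t ^ i} with hP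
  have hP1 : P 1 := by simpa [hP] using hJ
  set i := Nat.findGreatest P a with hi
  have hi1 : 1 ≤ i := Nat.le_findGreatest ha hP1
  have hia : i ≤ a := Nat.findGreatest_le a
  have hspec : P i := Nat.findGreatest_spec ha hP1
  rcases eq_or_lt_of_le hia with heq | hlt
  · refine ⟨a, by omega, le_rfl, ?_⟩
    have : J ≤ span {t ^ a} := heq ▸ hspec
    have hbot : span ({t ^ a} : Set T) = ⊥ := by
      rw [hta, span_singleton_eq_bot]
    rw [hbot] at this ⊢
    exact le_bot_iff.mp this
  · have hnot : ¬ P (i + 1) :=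
      Nat.findGreatest_is_greatest (P := P) (n := a) (by omega) (by omega)
    rw [hP] at hnot
    obtain ⟨z, hzJ, hz⟩ := SetLike.not_le_iff_exists.mp hnot
    obtain ⟨c, hc⟩ := mem_span_singleton.mp (hspec hzJ)
    have hcu : IsUnit c := by
      refine isUnit_of_not_mem_span hmax ⟨a, hta⟩ ?_
      intro hcmem
      obtain ⟨d, hd⟩ := mem_span_singleton.mp hcmem
      exact hz (mem_span_singleton.mpr ⟨d, by rw [hc, hd, pow_succ]; ring⟩)
    refine ⟨i, hi1, hia, le_antisymm hspec ?_⟩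
    rw [span_le, Set.singleton_subset_iff]
    obtain ⟨v, hv⟩ := hcu
    have : z * ↑v⁻¹ = t ^ i := by
      rw [hc, ← hv, Units.mul_inv_cancel_right]
    exact this ▸ J.mul_mem_right _ hzJ

end LocalPiece

lemma pr_apply (ha : a ≠ 0) (q : Polynomial (ZMod (p ^ a))) :
    pr ha q = q.map (ZMod.castHom (dvd_pow_self p ha) (ZMod p)) := rfl

lemma hensel (ha : a ≠ 0) {n : ℕ} (hn : 0 < n) {g k0 : Polynomial (ZMod p)}
    (hg : g.Monic) (hk0 : k0.Monic) (hgk : g * k0 = X ^ n - 1)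
    (hco : IsCoprime g k0) :
    ∃ h k : Polynomial (ZMod (p ^ a)), h.Monic ∧ k.Monic ∧ pr ha h = g ∧ pr ha k = k0 ∧
      h * k = (X : Polynomial (ZMod (p ^ a))) ^ n - 1 := by
  haveI : Fact (1 < p ^ a) := ⟨Nat.one_lt_pow ha (Fact.out : p.Prime).one_lt⟩
  have hfm : ((X : Polynomial (ZMod (p ^ a))) ^ n - 1).Monic := by
    simpa using monic_X_pow_sub_C (1 : ZMod (p ^ a)) hn.ne'
  have hdegf : ((X : Polynomial (ZMod (p ^ a))) ^ n - 1).degree = n := by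
    simpa using degree_X_pow_sub_C hn (1 : ZMod (p ^ a))
  have hdegg : g.degree + k0.degree = n := by
    rw [← degree_mul, hgk]
    simpa using degree_X_pow_sub_C hn (1 : ZMod p)
  have key : ∀ m, 1 ≤ m → ∃ h k : Polynomial (ZMod (p ^ a)), h.Monic ∧ k.Monic ∧
      pr ha h = g ∧ pr ha k = k0 ∧
      C ((p : ZMod (p ^ a)) ^ m) ∣ (X ^ n - 1 - h * k) := by
    intro m hm
    induction m, hm using Nat.le_induction with
    | base =>
      obtain ⟨h, hh1, hh2, hh3⟩ := lifts_and_degree_eq_and_monic (mem_lifts_all ha g) hg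
      obtain ⟨k, hk1, hk2, hk3⟩ := lifts_and_degree_eq_and_monic (mem_lifts_all ha k0) hk0
      have hprh : pr ha h = g := hh1
      have hprk : pr ha k = k0 := hk1
      refine ⟨h, k, hh3, hk3, hprh, hprk, ?_⟩
      rw [pow_one, ← mem_span_singleton, ← ker_pr ha, RingHom.mem_ker, map_sub,
        _root_.map_mul, pr_f, hprh, hprk, hgk, sub_self]
    | succ m hm ih =>
      obtain ⟨h, k, hmh, hmk, hprh, hprk, hdvd⟩ := ih
      have hdegh : h.degree = g.degree := by
        rw [← hprh, pr_apply, hmh.degree_map]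
      have hdegk : k.degree = k0.degree := by
        rw [← hprk, pr_apply, hmk.degree_map]
      have hmhk : (h * k).Monic := hmh.mul hmk
      have hdeghk : (h * k).degree = n := by
        rw [degree_mul' (by rw [hmh.leadingCoeff, hmk.leadingCoeff, one_mul]; exact one_ne_zero),
          hdegh, hdegk, hdegg]
      obtain ⟨e0, he0⟩ := hdvd
      have hsub : ((X : Polynomial (ZMod (p ^ a))) ^ n - 1 - h * k).degree < n := by
        have := degree_sub_lt (hdegf.trans hdeghk.symm) hfm.ne_zero
          (hfm.leadingCoeff.trans hmhk.leadingCoeff.symm)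
        rwa [hdegf] at this
      obtain ⟨heq, hlt⟩ := trunc ((p : ZMod (p ^ a)) ^ m) n e0 (he0 ▸ hsub)
      set e := e0 %ₘ X ^ n with he_def
      have hfe : (X : Polynomial (ZMod (p ^ a))) ^ n - 1 - h * k
          = C ((p : ZMod (p ^ a)) ^ m) * e := by rw [heq, ← he0]
      set ebar := pr ha e with hebar
      have hdege : ebar.degree < n := by
        rw [hebar, pr_apply]
        exact lt_of_le_of_lt degree_map_le hlt
      obtain ⟨A, B, hAB⟩ := hco
      set rbar := (ebar * B) %ₘ g with hrbar
      set ubar := ebar * A + ((ebar * B) /ₘ g) * k0 with hubar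
      have hsplit : (ebar * B) %ₘ g + g * ((ebar * B) /ₘ g) = ebar * B :=
        modByMonic_add_div _ _
      have hbez : ubar * g + rbar * k0 = ebar := by
        rw [hubar, hrbar]
        linear_combination k0 * hsplit + ebar * hAB
      have hdegr : rbar.degree < g.degree := degree_modByMonic_lt _ hg
      have hdegu : ubar.degree < k0.degree := by
        have hug : ubar * g = ebar - rbar * k0 := by linear_combination hbez
        have hd2 : (ebar - rbar * k0).degree < n := by
          refine lt_of_le_of_lt (degree_sub_le _ _) (max_lt hdege ?_)
          rw [degree_mul, ← hdegg]
          exact (WithBot.add_lt_add_iff_right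
            (by rw [Ne, degree_eq_bot]; exact hk0.ne_zero)).mpr hdegr
        have hd3 : ubar.degree + g.degree < k0.degree + g.degree := by
          rw [← degree_mul, hug]
          rw [← hdegg, add_comm g.degree k0.degree] at hd2
          exact hd2
        exact lt_of_add_lt_add_right hd3
      obtain ⟨r, hr1, hr2⟩ := mem_lifts_and_degree_eq (mem_lifts_all ha rbar)
      obtain ⟨u, hu1, hu2⟩ := mem_lifts_and_degree_eq (mem_lifts_all ha ubar)
      have hprr : pr ha r = rbar := hr1
      have hpru : pr ha u = ubar := hu1
      set c := C ((p : ZMod (p ^ a)) ^ m) with hc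
      have hprc : pr ha c = 0 := by
        rw [hc, pr_apply, map_C, map_pow, map_natCast, ZMod.natCast_self,
          zero_pow (by omega : m ≠ 0), C_0]
      refine ⟨h + c * r, k + c * u, ?_, ?_, ?_, ?_, ?_⟩
      · exact hmh.add_of_left (lt_of_le_of_lt (degree_C_mul_le' _ _)
          (hr2 ▸ (hdegr.trans_le hdegh.symm.le)))
      · exact hmk.add_of_left (lt_of_le_of_lt (degree_C_mul_le' _ _)
          (hu2 ▸ (hdegu.trans_le hdegk.symm.le)))
      · rw [map_add, _root_.map_mul, hprc, hprh, zero_mul, add_zero]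
      · rw [map_add, _root_.map_mul, hprc, hprk, zero_mul, add_zero]
      · have hker : pr ha (e - (r * k + u * h) - c * (r * u)) = 0 := by
          rw [map_sub, map_sub, map_add, _root_.map_mul, _root_.map_mul, _root_.map_mul,
            hprc, hprr, hpru, hprh, hprk, zero_mul, sub_zero, ← hebar]
          linear_combination -hbez
        have hmem : e - (r * k + u * h) - c * (r * u) ∈
            RingHom.ker (pr (p := p) ha) := hker
        rw [ker_pr ha, mem_span_singleton] at hmem
        obtain ⟨s, hs⟩ := hmem
        refine ⟨s, ?_⟩
        have hid : (X : Polynomial (ZMod (p ^ a))) ^ n - 1 - (h + c * r) * (k + c * u)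
            = c * (e - (r * k + u * h) - c * (r * u)) := by
          rw [hc]; linear_combination hfe
        rw [hid, hs, pow_succ, ← mul_assoc, _root_.map_mul (C : ZMod (p^a) →+* Polynomial (ZMod (p^a)))]
  obtain ⟨h, k, h1, h2, h3, h4, h5⟩ := key a (by omega)
  have hz : C ((p : ZMod (p ^ a)) ^ a) = (0 : Polynomial (ZMod (p ^ a))) := by
    rw [← Nat.cast_pow, ZMod.natCast_self, C_0]
  rw [hz, zero_dvd_iff, sub_eq_zero] at h5
  exact ⟨h, k, h1, h2, h3, h4, h5.symm⟩

lemma comap_pr_span (ha : a ≠ 0) {g : Polynomial (ZMod p)} {h : Polynomial (ZMod (p ^ a))}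
    (hh : pr ha h = g) :
    comap (pr (p := p) ha) (span {g}) = span {h, C (p : ZMod (p ^ a))} := by
  apply le_antisymm
  · intro z hz
    rw [mem_comap, mem_span_singleton] at hz
    obtain ⟨wbar, hw⟩ := hz
    obtain ⟨w, hw'⟩ := pr_surj ha wbar
    have hker : z - h * w ∈ RingHom.ker (pr (p := p) ha) := by
      rw [RingHom.mem_ker, map_sub, _root_.map_mul, hh, hw', hw, sub_self]
    rw [ker_pr ha, mem_span_singleton] at hker
    obtain ⟨s, hs⟩ := hker
    rw [mem_span_pair]
    exact ⟨w, s, by rw [mul_comm w h, mul_comm s _, ← hs]; ring⟩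
  · rw [span_le]
    rintro x (rfl | rfl)
    · rw [SetLike.mem_coe, mem_comap, hh]
      exact subset_span rfl
    · rw [SetLike.mem_coe, mem_comap, pr_C_p ha]
      exact zero_mem _
lemma isMaximal_span_h_p (ha : a ≠ 0) {h : Polynomial (ZMod (p ^ a))}
    (hirr : Irreducible (pr ha h)) :
    (span {h, C (p : ZMod (p ^ a))}).IsMaximal := by
  set g := pr ha h with hg
  haveI hmax : (span ({g} : Set (Polynomial (ZMod p)))).IsMaximal :=
    PrincipalIdealRing.isMaximal_of_irreducible hirr
  letI : Field (Polynomial (ZMod p) ⧸ span ({g} : Set (Polynomial (ZMod p)))) :=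
    Ideal.Quotient.field _
  have hsurj : Function.Surjective
      ((Ideal.Quotient.mk (span ({g} : Set (Polynomial (ZMod p))))).comp (pr (p := p) ha)) :=
    (Ideal.Quotient.mk_surjective).comp (pr_surj ha)
  have hker : RingHom.ker
      ((Ideal.Quotient.mk (span ({g} : Set (Polynomial (ZMod p))))).comp (pr (p := p) ha))
      = span {h, C (p : ZMod (p ^ a))} := by
    rw [← RingHom.comap_ker, Ideal.mk_ker, comap_pr_span ha rfl]
  have := RingHom.ker_isMaximal_of_surjective _ hsurj
  rwa [hker] at this

lemma comap_primary {R S : Type*} [CommRing R] [CommRing S] (f : R →+* S)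
    {Q : Ideal S} (hQ : Q.IsPrimary) : (Ideal.comap f Q).IsPrimary := by
  rw [Ideal.isPrimary_iff] at hQ ⊢
  constructor
  · intro htop
    refine hQ.1 (Ideal.eq_top_iff_one _ |>.mpr ?_)
    have : (1 : R) ∈ comap f Q := htop ▸ Submodule.mem_top
    simpa using this
  · intro x y hxy
    rcases hQ.2 (show f x * f y ∈ Q by rw [← _root_.map_mul]; exact hxy) with h1 | h2
    · exact Or.inl h1
    · right
      rw [Ideal.mem_radical_iff] at h2 ⊢
      obtain ⟨c, hc⟩ := h2
      exact ⟨c, by rw [mem_comap, map_pow]; exact hc⟩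

lemma map_primary {R S : Type*} [CommRing R] [CommRing S] (f : R →+* S)
    (hf : Function.Surjective f) {I : Ideal R} (hker : RingHom.ker f ≤ I)
    (hI : I.IsPrimary) : (Ideal.map f I).IsPrimary := by
  rw [Ideal.isPrimary_iff] at hI ⊢
  have hcm : comap f (map f I) = I := by
    rw [comap_map_of_surjective f hf]
    exact sup_eq_left.mpr hker
  constructor
  · intro htop
    refine hI.1 ?_
    rw [← hcm, htop, comap_top]
  · intro x y hxy
    obtain ⟨x', rfl⟩ := hf x
    obtain ⟨y', rfl⟩ := hf y
    have : x' * y' ∈ I := by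
      rw [← hcm, mem_comap, _root_.map_mul]; exact hxy
    rcases hI.2 this with h1 | h2
    · exact Or.inl (mem_map_of_mem f h1)
    · right
      rw [Ideal.mem_radical_iff] at h2 ⊢
      obtain ⟨c, hc⟩ := h2
      exact ⟨c, by rw [← map_pow]; exact mem_map_of_mem f hc⟩

lemma C_p_pow_zero (ha : a ≠ 0) :
    (C (p : ZMod (p ^ a))) ^ a = (0 : Polynomial (ZMod (p ^ a))) := by
  rw [← map_pow, ← Nat.cast_pow, ZMod.natCast_self, C_0]

lemma radical_span_pow (ha : a ≠ 0) {h : Polynomial (ZMod (p ^ a))}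
    (hirr : Irreducible (pr ha h)) {i : ℕ} (h1 : 1 ≤ i) :
    radical (span {h, (C (p : ZMod (p ^ a))) ^ i}) = span {h, C (p : ZMod (p ^ a))} := by
  have hMmax := isMaximal_span_h_p ha hirr
  have hIM : span {h, (C (p : ZMod (p ^ a))) ^ i} ≤ span {h, C (p : ZMod (p ^ a))} := by
    rw [span_le]
    rintro x (rfl | rfl)
    · exact subset_span (by left; rfl)
    · exact Ideal.pow_mem_of_mem _ (subset_span (by right; rfl)) _ (by omega)
  apply le_antisymm
  · calc radical (span {h, (C (p : ZMod (p ^ a))) ^ i})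
        ≤ radical (span {h, C (p : ZMod (p ^ a))}) := radical_mono hIM
      _ = span {h, C (p : ZMod (p ^ a))} := hMmax.isPrime.radical
  · rw [span_le]
    rintro x (rfl | rfl)
    · exact le_radical (subset_span (by left; rfl))
    · exact ⟨i, subset_span (by right; rfl)⟩

lemma primary_span (ha : a ≠ 0) {h : Polynomial (ZMod (p ^ a))}
    (hirr : Irreducible (pr ha h)) {i : ℕ} (h1 : 1 ≤ i) :
    (span {h, (C (p : ZMod (p ^ a))) ^ i}).IsPrimary := by
  apply Ideal.isPrimary_of_isMaximal_radical
  rw [radical_span_pow ha hirr h1]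
  exact isMaximal_span_h_p ha hirr

lemma quotient_max (ha : a ≠ 0) {h : Polynomial (ZMod (p ^ a))}
    (hirr : Irreducible (pr ha h)) :
    (span {Ideal.Quotient.mk (span ({h} : Set (Polynomial (ZMod (p ^ a))))) (C (p : ZMod (p ^ a)))}).IsMaximal := by
  set mk' := Ideal.Quotient.mk (span ({h} : Set (Polynomial (ZMod (p ^ a))))) with hmk
  have hM := isMaximal_span_h_p ha hirr
  have hmkh : mk' h = 0 := Ideal.Quotient.eq_zero_iff_mem.mpr (subset_span rfl)
  have himg : Ideal.map mk' (span {h, C (p : ZMod (p ^ a))}) = span {mk' (C (p : ZMod (p ^ a)))} := by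
    rw [Ideal.map_span, Set.image_pair, hmkh]
    rw [show ({(0 : _), mk' (C (p : ZMod (p ^ a)))} : Set _)
        = insert 0 {mk' (C (p : ZMod (p ^ a)))} from rfl, span_insert,
      span_singleton_eq_bot.mpr rfl, bot_sup_eq]
  rcases Ideal.map_eq_top_or_isMaximal_of_surjective mk' Ideal.Quotient.mk_surjective hM
    with htop | hmax
  · exfalso
    have hker : RingHom.ker mk' ≤ span {h, C (p : ZMod (p ^ a))} := by
      rw [hmk, Ideal.mk_ker, span_le, Set.singleton_subset_iff]
      exact subset_span (by left; rfl)
    have := comap_map_of_surjective mk' Ideal.Quotient.mk_surjective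
      (span {h, C (p : ZMod (p ^ a))})
    rw [htop, comap_top] at this
    exact hM.ne_top (by rw [← sup_eq_left.mpr hker]; exact this.symm)
  · rwa [himg] at hmax

lemma primary_structure (ha : a ≠ 0) {n : ℕ} (hn : 0 < n) (hpn : ¬ p ∣ n)
    {I : Ideal (Polynomial (ZMod (p ^ a)))} (hI : I.IsPrimary)
    (hXn : (X : Polynomial (ZMod (p ^ a))) ^ n - 1 ∈ I) :
    ∃ h : Polynomial (ZMod (p ^ a)), h.Monic ∧ h ∣ (X ^ n - 1) ∧ Irreducible (pr ha h) ∧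
      ∃ i : ℕ, 1 ≤ i ∧ i ≤ a ∧ I = span {h, (C (p : ZMod (p ^ a))) ^ i} := by
  haveI : Fact (1 < p ^ a) := ⟨Nat.one_lt_pow ha (Fact.out : p.Prime).one_lt⟩
  obtain ⟨hInetop, hIprim⟩ := Ideal.isPrimary_iff.mp hI
  set P := radical I with hP
  haveI hPprime : P.IsPrime := Ideal.isPrime_radical hI
  have hCpP : C (p : ZMod (p ^ a)) ∈ P := ⟨a, by rw [C_p_pow_zero ha]; exact I.zero_mem⟩
  have hkerP : RingHom.ker (pr (p := p) ha) ≤ P := by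
    rw [ker_pr ha, span_le, Set.singleton_subset_iff]
    exact hCpP
  set P' := Ideal.map (pr (p := p) ha) P with hP'
  haveI hP'prime : P'.IsPrime := Ideal.map_isPrime_of_surjective (pr_surj ha) hkerP
  have hfP' : (X : Polynomial (ZMod p)) ^ n - 1 ∈ P' := by
    have : pr ha ((X : Polynomial (ZMod (p ^ a))) ^ n - 1) ∈ P' :=
      mem_map_of_mem _ (le_radical hXn)
    rwa [pr_f ha] at this
  have hfpm : ((X : Polynomial (ZMod p)) ^ n - 1).Monic := by
    simpa using monic_X_pow_sub_C (1 : ZMod p) hn.ne'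
  have hP'nebot : P' ≠ ⊥ := by
    intro hbot
    rw [hbot, Submodule.mem_bot] at hfP'
    exact hfpm.ne_zero hfP'
  obtain ⟨g0, hg0⟩ := (IsPrincipalIdealRing.principal P').principal
  rw [Ideal.submodule_span_eq] at hg0
  have hg0ne : g0 ≠ 0 := by
    rintro rfl
    rw [hg0] at hP'nebot
    exact hP'nebot (span_singleton_eq_bot.mpr rfl)
  have hg0prime : Prime g0 := (span_singleton_prime hg0ne).mp (hg0 ▸ hP'prime)
  set g := g0 * C (g0.leadingCoeff)⁻¹ with hgdef
  have hgm : g.Monic := monic_mul_leadingCoeff_inv hg0ne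
  have hunit : IsUnit (C (g0.leadingCoeff)⁻¹ : Polynomial (ZMod p)) :=
    isUnit_C.mpr (isUnit_iff_ne_zero.mpr (inv_ne_zero (leadingCoeff_ne_zero.mpr hg0ne)))
  have hspan_g : P' = span {g} := by
    rw [hg0, hgdef, span_singleton_mul_right_unit hunit]
  have hgirr : Irreducible g :=
    (associated_mul_unit_right g0 _ hunit).irreducible hg0prime.irreducible
  have hgdvd : g ∣ (X : Polynomial (ZMod p)) ^ n - 1 :=
    mem_span_singleton.mp (hspan_g ▸ hfP')
  obtain ⟨k0, hk0⟩ := hgdvd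
  have hk0m : k0.Monic := hgm.of_mul_monic_left (hk0 ▸ hfpm)
  have hnne : (n : ZMod p) ≠ 0 := by
    rw [Ne, ZMod.natCast_eq_zero_iff]
    exact hpn
  have hsep : ((X : Polynomial (ZMod p)) ^ n - 1).Separable := by
    simpa using separable_X_pow_sub_C (1 : ZMod p) hnne one_ne_zero
  have hco : IsCoprime g k0 := by
    apply Polynomial.Separable.isCoprime
    rw [← hk0]
    exact hsep
  obtain ⟨h, k, hmh, hmk, hprh, hprk, hhk⟩ := hensel ha hn hgm hk0m hk0.symm hco
  -- P = span {h, C p}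
  have hcomapP : comap (pr (p := p) ha) P' = P := by
    rw [hP', comap_map_of_surjective _ (pr_surj ha)]
    exact sup_eq_left.mpr hkerP
  have hPspan : P = span {h, C (p : ZMod (p ^ a))} := by
    rw [← hcomapP, hspan_g, comap_pr_span ha hprh]
  -- h ∈ I
  have hkP : k ∉ P := by
    intro hk
    have : pr ha k ∈ P' := mem_map_of_mem _ hk
    rw [hspan_g, hprk, mem_span_singleton] at this
    exact hgirr.not_isUnit (hco.isUnit_of_dvd' dvd_rfl this)
  have hhI : h ∈ I := by
    rcases hIprim (show h * k ∈ I by rw [hhk]; exact hXn) with h1 | h2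
    · exact h1
    · exact absurd h2 hkP
  -- pass to the quotient by h
  set mk' := Ideal.Quotient.mk (span ({h} : Set (Polynomial (ZMod (p ^ a))))) with hmk
  have hker' : RingHom.ker mk' = span ({h} : Set (Polynomial (ZMod (p ^ a)))) := Ideal.mk_ker
  have hmkh : mk' h = 0 := Ideal.Quotient.eq_zero_iff_mem.mpr (subset_span rfl)
  have hirrh : Irreducible (pr ha h) := hprh ▸ hgirr
  have htmax := quotient_max ha hirrh
  have htnil : (mk' (C (p : ZMod (p ^ a)))) ^ a = 0 := by
    rw [← map_pow, C_p_pow_zero ha, map_zero]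
  have hJle : Ideal.map mk' I ≤ span {mk' (C (p : ZMod (p ^ a)))} := by
    have h1 : Ideal.map mk' I ≤ Ideal.map mk' (span {h, C (p : ZMod (p ^ a))}) :=
      Ideal.map_mono (hPspan ▸ le_radical)
    have h2 : Ideal.map mk' (span {h, C (p : ZMod (p ^ a))})
        = span {mk' (C (p : ZMod (p ^ a)))} := by
      rw [Ideal.map_span, Set.image_pair, hmkh,
        show ({(0 : _), mk' (C (p : ZMod (p ^ a)))} : Set _)
          = insert 0 {mk' (C (p : ZMod (p ^ a)))} from rfl, span_insert,
        span_singleton_eq_bot.mpr rfl, bot_sup_eq]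
    exact h1.trans h2.le
  obtain ⟨i, hi1, hia, hJ⟩ := ideal_eq_pow (Nat.pos_of_ne_zero ha) htnil htmax hJle
  refine ⟨h, hmh, ⟨k, hhk.symm⟩, hirrh, i, hi1, hia, ?_⟩
  have hkerI : RingHom.ker mk' ≤ I := by
    rw [hker', span_le, Set.singleton_subset_iff]
    exact hhI
  have hcmI : comap mk' (Ideal.map mk' I) = I := by
    rw [comap_map_of_surjective _ Ideal.Quotient.mk_surjective]
    exact sup_eq_left.mpr hkerI
  have himg2 : Ideal.map mk' (span {h, (C (p : ZMod (p ^ a))) ^ i})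
      = span {(mk' (C (p : ZMod (p ^ a)))) ^ i} := by
    rw [Ideal.map_span, Set.image_pair, hmkh, map_pow,
      show ({(0 : _), (mk' (C (p : ZMod (p ^ a)))) ^ i} : Set _)
        = insert 0 {(mk' (C (p : ZMod (p ^ a)))) ^ i} from rfl, span_insert,
      span_singleton_eq_bot.mpr rfl, bot_sup_eq]
  have hkerI2 : RingHom.ker mk' ≤ span {h, (C (p : ZMod (p ^ a))) ^ i} := by
    rw [hker', span_le, Set.singleton_subset_iff]
    exact subset_span (by left; rfl)
  have hcmI2 : comap mk' (Ideal.map mk' (span {h, (C (p : ZMod (p ^ a))) ^ i}))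
      = span {h, (C (p : ZMod (p ^ a))) ^ i} := by
    rw [comap_map_of_surjective _ Ideal.Quotient.mk_surjective]
    exact sup_eq_left.mpr hkerI2
  rw [← hcmI, ← hcmI2, himg2, hJ]

end Stmt6Aux

theorem stmt6 (p : ℕ) [Fact p.Prime] (a n : ℕ) (ha : 0 < a) (hn : 0 < n) (hpn : ¬ p ∣ n)
    (Q : Ideal (Rquot p a n)) :
    Q.IsPrimary ↔ ∃ h : Polynomial (ZMod (p ^ a)), BasicIrr p a n ha.ne' h ∧
      ∃ i : ℕ, 1 ≤ i ∧ i ≤ a ∧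
        Q = Ideal.span {rmk p a n h, rmk p a n (C ((p : ZMod (p ^ a)) ^ i))} := by
  constructor
  · intro hQ
    have hI : (Ideal.comap (rmk p a n) Q).IsPrimary := Stmt6Aux.comap_primary _ hQ
    have hXn : (X : Polynomial (ZMod (p ^ a))) ^ n - 1 ∈ Ideal.comap (rmk p a n) Q := by
      rw [Ideal.mem_comap]
      have h0 : rmk p a n ((X : Polynomial (ZMod (p ^ a))) ^ n - 1) = 0 :=
        Ideal.Quotient.eq_zero_iff_mem.mpr (Ideal.subset_span rfl)
      rw [h0]
      exact Q.zero_mem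
    obtain ⟨h, hmh, hdvd, hirr, i, hi1, hia, hEq⟩ :=
      Stmt6Aux.primary_structure ha.ne' hn hpn hI hXn
    refine ⟨h, ⟨hmh, hdvd, hirr⟩, i, hi1, hia, ?_⟩
    have hQmap : Q = Ideal.map (rmk p a n) (Ideal.comap (rmk p a n) Q) :=
      (Ideal.map_comap_of_surjective _ Ideal.Quotient.mk_surjective Q).symm
    rw [C_pow, hQmap, hEq, Ideal.map_span, Set.image_pair]
  · rintro ⟨h, ⟨hmh, hdvd, hirr⟩, i, hi1, hia, rfl⟩
    have hirr' : Irreducible (Stmt6Aux.pr ha.ne' h) := by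
      rw [Stmt6Aux.pr_apply]
      exact hirr
    have hXn : (X : Polynomial (ZMod (p ^ a))) ^ n - 1
        ∈ Ideal.span {h, (C (p : ZMod (p ^ a))) ^ i} := by
      obtain ⟨k, hk⟩ := hdvd
      rw [hk, mul_comm]
      exact Ideal.mul_mem_left _ _ (Ideal.subset_span (by left; rfl))
    have hker : RingHom.ker (rmk p a n) ≤ Ideal.span {h, (C (p : ZMod (p ^ a))) ^ i} := by
      rw [Ideal.mk_ker, Ideal.span_le, Set.singleton_subset_iff]
      exact hXn
    have hprim := Stmt6Aux.map_primary (rmk p a n) Ideal.Quotient.mk_surjective hker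
      (Stmt6Aux.primary_span ha.ne' hirr' hi1)
    rw [C_pow, ← Set.image_pair (rmk p a n), ← Ideal.map_span]
    exact hprim
end

section
/- For every ideal I of R_a there exist polynomials f₀, f₁, …, f_{a−1} ∈ (ZMod p^a)[X], each monic and dividing X^n − 1, satisfying the divisibility chain f_{a−1} | f_{a−2} | ⋯ | f₁ | f₀, such that I is the ideal of R_a generated by the images of f₀, p·f₁, p²·f₂, …, p^{a−1}·f_{a−1}. -/
open Polynomial

namespace S9


variable {p : ℕ} [hp : Fact p.Prime] {b : ℕ}
set_option linter.unusedSectionVars false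

/-- reduction map `ZMod (p^(b+1)) → ZMod (p^1)` -/
noncomputable def phi (p b : ℕ) : ZMod (p^(b+1)) →+* ZMod (p^1) :=
  ZMod.castHom (pow_dvd_pow p (Nat.le_add_left 1 b)) _

lemma factK (p : ℕ) [hp : Fact p.Prime] : Fact ((p^1).Prime) :=
  ⟨by simpa using hp.out⟩

lemma phi_natCast (k : ℕ) : phi p b (k : ZMod (p^(b+1))) = (k : ZMod (p^1)) :=
  map_natCast _ k

lemma phi_p : phi p b ((p : ZMod (p^(b+1)))) = 0 := by
  rw [show ((p : ZMod (p^(b+1)))) = ((p : ℕ) : ZMod (p^(b+1))) from rfl, phi_natCast]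
  exact (ZMod.natCast_eq_zero_iff p (p^1)).mpr (by rw [pow_one])

lemma phi_surj : Function.Surjective (phi p b) := by
  haveI := factK p
  haveI : NeZero (p^1) := ⟨pow_ne_zero 1 hp.out.pos.ne'⟩
  intro x
  obtain ⟨k, rfl⟩ := ZMod.natCast_zmod_surjective x
  exact ⟨k, phi_natCast k⟩

lemma dvd_of_phi_eq_zero (x : ZMod (p^(b+1))) (h : phi p b x = 0) :
    (p : ZMod (p^(b+1))) ∣ x := by
  haveI : NeZero (p^(b+1)) := ⟨pow_ne_zero _ hp.out.pos.ne'⟩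
  have hx : x = ((x.val : ℕ) : ZMod (p^(b+1))) := by
    rw [ZMod.natCast_val, ZMod.cast_id]
  rw [hx, phi_natCast] at h
  have hdvd : p ∣ x.val := by
    have := (ZMod.natCast_eq_zero_iff _ _).mp h
    rwa [pow_one] at this
  obtain ⟨c, hc⟩ := hdvd
  exact ⟨(c : ZMod (p^(b+1))), by rw [hx, hc]; push_cast; ring⟩

lemma ker_pi (q : Polynomial (ZMod (p^(b+1)))) (h : q.map (phi p b) = 0) :
    ∃ v, q = C ((p : ZMod (p^(b+1)))) * v := by
  have hq : q ∈ Ideal.map (C : (ZMod (p^(b+1))) →+* _) (Ideal.span {(p : ZMod (p^(b+1)))}) := by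
    rw [Ideal.mem_map_C_iff]
    intro i
    rw [Ideal.mem_span_singleton]
    apply dvd_of_phi_eq_zero
    have := congrArg (fun q => Polynomial.coeff q i) h
    simpa [coeff_map] using this
  rw [Ideal.map_span, Set.image_singleton, Ideal.mem_span_singleton] at hq
  exact hq

lemma isNilpotent_Cp : IsNilpotent (C ((p : ZMod (p^(b+1))))) := by
  refine ⟨b+1, ?_⟩
  rw [← C_pow, ← Nat.cast_pow, ZMod.natCast_self, C_0]

lemma coprime_lift {d e : Polynomial (ZMod (p^(b+1)))}
    (h : IsCoprime (d.map (phi p b)) (e.map (phi p b))) : IsCoprime d e := by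
  obtain ⟨ub, vb, huv⟩ := h
  obtain ⟨u, rfl⟩ := Polynomial.map_surjective (phi p b) phi_surj ub
  obtain ⟨v, rfl⟩ := Polynomial.map_surjective (phi p b) phi_surj vb
  have hker : (1 - (u * d + v * e)).map (phi p b) = 0 := by
    rw [Polynomial.map_sub, Polynomial.map_add, Polynomial.map_mul, Polynomial.map_mul,
      Polynomial.map_one, huv, sub_self]
  obtain ⟨z, hz⟩ := ker_pi _ hker
  have hunit : IsUnit (u * d + v * e) := by
    have h1 : u * d + v * e = 1 - C ((p : ZMod (p^(b+1)))) * z := by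
      rw [← hz]; ring
    rw [h1]
    exact ((Commute.all _ _).isNilpotent_mul_right (isNilpotent_Cp (p:=p) (b:=b))).isUnit_one_sub
  obtain ⟨w, hw⟩ := hunit.exists_left_inv
  exact ⟨w * u, w * v, by rw [mul_assoc, mul_assoc, ← mul_add, hw]⟩

lemma sqf (n : ℕ) (hn : 0 < n) (hpn : ¬ p ∣ n) :
    Squarefree ((X : Polynomial (ZMod (p^1)))^n - 1) := by
  haveI := factK p
  have hnK : ((n : ZMod (p^1))) ≠ 0 := by
    intro h
    have := (ZMod.natCast_eq_zero_iff n (p^1)).mp h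
    rw [pow_one] at this
    exact hpn this
  have hsep : ((X : Polynomial (ZMod (p^1)))^n - 1).Separable := by
    have := Polynomial.separable_X_pow_sub_C (1 : ZMod (p^1)) hnK one_ne_zero
    simpa using this
  exact hsep.squarefree

lemma coprime_split {n : ℕ} (hn : 0 < n) (hpn : ¬ p ∣ n)
    {g h : Polynomial (ZMod (p^1))} (hs : g * h = (X : Polynomial (ZMod (p^1)))^n - 1) :
    IsCoprime g h := by
  haveI := factK p
  classical
  rw [← EuclideanDomain.gcd_isUnit_iff]
  apply sqf n hn hpn (EuclideanDomain.gcd g h)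
  rw [← hs]
  exact mul_dvd_mul (EuclideanDomain.gcd_dvd_left g h) (EuclideanDomain.gcd_dvd_right g h)

lemma map_Xn_sub_one :
    ((X : Polynomial (ZMod (p^(b+1))))^n - 1).map (phi p b) = (X : Polynomial (ZMod (p^1)))^n - 1 := by
  simp [Polynomial.map_sub, Polynomial.map_pow, Polynomial.map_one, Polynomial.map_X]

lemma dvd_of_red_dvd {n : ℕ} (hn : 0 < n) (hpn : ¬ p ∣ n)
    {D1 H1 D2 H2 : Polynomial (ZMod (p^(b+1)))}
    (h1 : D1 * H1 = (X : Polynomial (ZMod (p^(b+1))))^n - 1)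
    (h2 : D2 * H2 = (X : Polynomial (ZMod (p^(b+1))))^n - 1)
    (hd : D1.map (phi p b) ∣ D2.map (phi p b)) : D1 ∣ D2 := by
  have hsplit : (D2.map (phi p b)) * (H2.map (phi p b)) = (X : Polynomial (ZMod (p^1)))^n - 1 := by
    rw [← Polynomial.map_mul, h2, map_Xn_sub_one]
  have c2 : IsCoprime (D2.map (phi p b)) (H2.map (phi p b)) := coprime_split hn hpn hsplit
  have c1 : IsCoprime (D1.map (phi p b)) (H2.map (phi p b)) := c2.of_isCoprime_of_dvd_left hd
  have c : IsCoprime D1 H2 := coprime_lift c1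
  have hdvd : D1 ∣ D2 * H2 := by rw [h2, ← h1]; exact dvd_mul_right D1 H1
  exact c.dvd_of_dvd_mul_right hdvd


end S9

theorem stmt9 (p : ℕ) [Fact p.Prime] (a n : ℕ) (ha : 0 < a) (hn : 0 < n) (hpn : ¬ p ∣ n)
    (I : Ideal (Rquot p a n)) :
    ∃ f : Fin a → Polynomial (ZMod (p ^ a)),
      (∀ i, (f i).Monic) ∧
      (∀ i, f i ∣ (X ^ n - 1)) ∧
      (∀ i j : Fin a, i ≤ j → f j ∣ f i) ∧
      I = Ideal.span (Set.range fun i : Fin a =>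
        rmk p a n (C ((p : ZMod (p ^ a)) ^ (i : ℕ)) * f i)) := by
  classical
  obtain ⟨b, rfl⟩ : ∃ b, a = b + 1 := ⟨a - 1, (Nat.succ_pred_eq_of_pos ha).symm⟩
  haveI := S9.factK p
  haveI : NeZero (p ^ (b+1)) := ⟨pow_ne_zero _ (Fact.out : p.Prime).pos.ne'⟩
  haveI : Fact (1 < p ^ (b+1)) :=
    ⟨Nat.one_lt_pow (Nat.succ_ne_zero b) (Fact.out : p.Prime).one_lt⟩
  set A := ZMod (p ^ (b+1)) with hA
  let φ := S9.phi p b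
  set m : Polynomial A := X ^ n - 1 with hm
  have hm_monic : m.Monic := by
    have := monic_X_pow_sub_C (1 : A) hn.ne'
    simpa [hm] using this
  have hmapm : m.map φ = (X : Polynomial (ZMod (p^1)))^n - 1 := S9.map_Xn_sub_one
  -- the pulled-back ideal
  set Itil : Ideal (Polynomial A) := I.comap (rmk p (b+1) n) with hItil
  have hmI : m ∈ Itil := by
    have h0 : rmk p (b+1) n m = 0 :=
      Ideal.Quotient.eq_zero_iff_mem.mpr (Ideal.subset_span rfl)
    show rmk p (b+1) n m ∈ I
    rw [h0]; exact I.zero_mem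
  -- torsion ideals
  set T : ℕ → Ideal (Polynomial A) :=
    (fun j => Itil.colon (Ideal.span {C ((p : A)^j)})) with hTdef
  have hT : ∀ j q, q ∈ T j ↔ C ((p : A)^j) * q ∈ Itil := by
    intro j q; rw [hTdef]; rw [Ideal.mem_colon_span_singleton, mul_comm]
  have hTstep : ∀ j, T j ≤ T (j+1) := by
    intro j q hq
    rw [hT] at hq ⊢
    have he : C ((p:A)^(j+1)) * q = C ((p:A)) * (C ((p:A)^j) * q) := by
      rw [← mul_assoc, ← C_mul, ← pow_succ']
    rw [he]; exact Itil.mul_mem_left _ hq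
  have hTmono : Monotone T := monotone_nat_of_le_succ hTstep
  have hmT : ∀ j, m ∈ T j := fun j => (hT j m).mpr (Itil.mul_mem_left _ hmI)
  have hpa : ((p : A))^(b+1) = 0 := by rw [← Nat.cast_pow, ZMod.natCast_self]
  have hTtop : ∀ j, b+1 ≤ j → T j = ⊤ := by
    intro j hj
    rw [eq_top_iff]
    intro q _
    rw [hT]
    have h0 : ((p:A)^j) = 0 := by
      obtain ⟨c, rfl⟩ := Nat.exists_eq_add_of_le hj
      rw [pow_add, hpa, zero_mul]
    rw [h0, C_0, zero_mul]; exact Itil.zero_mem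
  -- image ideals downstairs
  set Kb : ℕ → Ideal (Polynomial (ZMod (p^1))) :=
    (fun j => Ideal.map (mapRingHom φ) (T j)) with hKbdef
  have hKbmono : ∀ i j, i ≤ j → Kb i ≤ Kb j := fun i j hij => Ideal.map_mono (hTmono hij)
  have hmmKb : ∀ j, ((X : Polynomial (ZMod (p^1)))^n - 1) ∈ Kb j := by
    intro j
    have := Ideal.mem_map_of_mem (mapRingHom φ) (hmT j)
    rwa [coe_mapRingHom, hmapm] at this
  have hmm_monic : ((X : Polynomial (ZMod (p^1)))^n - 1).Monic := by
    have := monic_X_pow_sub_C (1 : ZMod (p^1)) hn.ne'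
    simpa using this
  -- monic generators downstairs
  have hgbar : ∀ j, ∃ g : Polynomial (ZMod (p^1)), g.Monic ∧ Ideal.span {g} = Kb j := by
    intro j
    obtain ⟨g, hg⟩ := (Submodule.IsPrincipal.principal (Kb j))
    rw [Ideal.submodule_span_eq] at hg
    have hgne : g ≠ 0 := by
      rintro rfl
      have := hmmKb j
      rw [hg, Ideal.span_singleton_eq_bot.mpr rfl, Ideal.mem_bot] at this
      exact hmm_monic.ne_zero this
    refine ⟨normalize g, monic_normalize hgne, ?_⟩
    rw [hg, Ideal.span_singleton_eq_span_singleton]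
    exact normalize_associated g
  choose gbar hgmonic hgspan using hgbar
  have hgmem : ∀ j, gbar j ∈ Kb j := fun j => by
    rw [← hgspan]; exact Ideal.subset_span rfl
  have hgdvd : ∀ j q, q ∈ Kb j → gbar j ∣ q := fun j q hq => by
    rw [← hgspan] at hq; exact Ideal.mem_span_singleton.mp hq
  have hgchain : ∀ i j, i ≤ j → gbar j ∣ gbar i :=
    fun i j hij => hgdvd j _ (hKbmono i j hij (hgmem i))
  have hgdvd_mm : ∀ j, gbar j ∣ ((X : Polynomial (ZMod (p^1)))^n - 1) :=
    fun j => hgdvd j _ (hmmKb j)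
  have hgtop : ∀ j, b+1 ≤ j → gbar j = 1 := by
    intro j hj
    have htop : Kb j = ⊤ := by rw [hKbdef]; simp only [hTtop j hj, Ideal.map_top]
    have : IsUnit (gbar j) := by
      rw [← Ideal.span_singleton_eq_top, hgspan, htop]
    exact (hgmonic j).eq_one_of_isUnit this
  have hπsurj : Function.Surjective (Polynomial.map φ) :=
    Polynomial.map_surjective φ S9.phi_surj
  have hKbmem : ∀ j q, q ∈ T j → q.map φ ∈ Kb j := by
    intro j q hq
    have := Ideal.mem_map_of_mem (mapRingHom φ) hq
    rwa [coe_mapRingHom] at this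
  have hKbmem' : ∀ j (qb : Polynomial (ZMod (p^1))), qb ∈ Kb j →
      ∃ q ∈ T j, q.map φ = qb := by
    intro j qb hqb
    rw [hKbdef] at hqb
    obtain ⟨q, hq, hq2⟩ := Ideal.mem_map_iff_of_surjective (mapRingHom φ)
      (by rw [coe_mapRingHom]; exact hπsurj) |>.mp hqb
    exact ⟨q, hq, by rwa [coe_mapRingHom] at hq2⟩
  -- construction of monic elements of T i mapping to gbar i
  have hW : ∀ j i, b + 1 ≤ i + j → ∃ w : Polynomial A,
      w.Monic ∧ w ∈ T i ∧ w.map φ = gbar i := by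
    intro j
    induction j with
    | zero =>
      intro i hi
      refine ⟨1, monic_one, ?_, ?_⟩
      · rw [hTtop i (by omega)]; trivial
      · rw [Polynomial.map_one, hgtop i (by omega)]
    | succ j ihj =>
      intro i hi
      by_cases hib : b + 1 ≤ i
      · refine ⟨1, monic_one, ?_, ?_⟩
        · rw [hTtop i hib]; trivial
        · rw [Polynomial.map_one, hgtop i hib]
      · obtain ⟨w', hw'm, hw'T, hw'map⟩ := ihj (i+1) (by omega)
        obtain ⟨u, huT, humap⟩ := hKbmem' i (gbar i) (hgmem i)
        have hglifts : gbar i ∈ Polynomial.lifts φ := (Polynomial.mem_lifts _).mpr ⟨u, humap⟩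
        obtain ⟨g0, hg0map, hg0deg, hg0mon⟩ :=
          Polynomial.lifts_and_degree_eq_and_monic hglifts (hgmonic i)
        obtain ⟨t, ht⟩ := S9.ker_pi (u - g0)
          (by rw [Polynomial.map_sub, humap, hg0map, sub_self])
        have hdegS : (t %ₘ w').degree < g0.degree := by
          calc (t %ₘ w').degree < w'.degree := degree_modByMonic_lt t hw'm
          _ = (gbar (i+1)).degree := by rw [← hw'map, hw'm.degree_map]
          _ ≤ (gbar i).degree :=
              degree_le_of_dvd (hgchain i (i+1) (Nat.le_succ i)) (hgmonic i).ne_zero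
          _ = g0.degree := hg0deg.symm
        have h2 := modByMonic_add_div t w'
        have key : g0 + C ((p:A)) * (t %ₘ w') = u - C ((p:A)) * (w' * (t /ₘ w')) := by
          linear_combination (-1 : Polynomial A) * ht + C ((p:A)) * h2
        refine ⟨g0 + C ((p:A)) * (t %ₘ w'), ?_, ?_, ?_⟩
        · exact hg0mon.add_of_left
            (lt_of_le_of_lt (le_trans (degree_mul_le _ _)
              (by simpa using add_le_add degree_C_le (le_refl (t %ₘ w').degree))) hdegS)
        · rw [key]
          apply Submodule.sub_mem _ huT
          rw [hT]
          have he : C ((p:A)^i) * (C ((p:A)) * (w' * (t /ₘ w'))) =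
              (C ((p:A)^(i+1)) * w') * (t /ₘ w') := by
            rw [← mul_assoc, ← mul_assoc, ← C_mul, ← pow_succ]
          rw [he]
          exact Itil.mul_mem_right _ ((hT (i+1) w').mp hw'T)
        · rw [Polynomial.map_add, hg0map, Polynomial.map_mul, map_C, S9.phi_p, C_0,
            zero_mul, add_zero]
  -- Hensel lifting inside the ideal: monic divisors of m in T i
  have hF : ∀ i, ∃ F : Polynomial A,
      F.Monic ∧ F ∈ T i ∧ F.map φ = gbar i ∧ F ∣ m := by
    intro i
    have main : ∀ k, ∃ W H E : Polynomial A,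
        W.Monic ∧ W ∈ T i ∧ W.map φ = gbar i ∧ m - W * H = C ((p:A)^(k+1)) * E := by
      intro k
      induction k with
      | zero =>
        obtain ⟨w, hwm, hwT, hwmap⟩ := hW (b+1) i (by omega)
        obtain ⟨E, hE⟩ := S9.ker_pi (m %ₘ w) (by
          rw [Polynomial.map_modByMonic φ hwm, hmapm, hwmap]
          exact (modByMonic_eq_zero_iff_dvd (hgmonic i)).mpr (hgdvd_mm i))
        refine ⟨w, m /ₘ w, E, hwm, hwT, hwmap, ?_⟩
        have hmd := modByMonic_add_div m w
        have : C ((p:A)^(0+1)) = C ((p:A)) := by norm_num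
        rw [this]
        linear_combination (-1 : Polynomial A) * hmd + hE
      | succ k ih =>
        obtain ⟨W, H, E, hWm, hWT, hWmap, hWH⟩ := ih
        have hsplit : (W.map φ) * (H.map φ) = (X : Polynomial (ZMod (p^1)))^n - 1 := by
          have hc := congrArg (Polynomial.map φ) hWH
          rw [Polynomial.map_sub, Polynomial.map_mul, hmapm, Polynomial.map_mul, map_C,
            map_pow, S9.phi_p, zero_pow (Nat.succ_ne_zero k), C_0, zero_mul] at hc
          linear_combination (-1 : Polynomial (ZMod (p^1))) * hc
        obtain ⟨u, v, huv⟩ := S9.coprime_lift (S9.coprime_split hn hpn hsplit)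
        set S : Polynomial A := (E*v) %ₘ W with hSdef
        set Q : Polynomial A := (E*v) /ₘ W with hQdef
        have hS : S + W * Q = E * v := modByMonic_add_div (E*v) W
        refine ⟨W + C ((p:A)^(k+1)) * S, H + C ((p:A)^(k+1)) * (E*u + Q*H),
          -(C ((p:A)^k) * (S * (E*u + Q*H))), ?_, ?_, ?_, ?_⟩
        · apply hWm.add_of_left
          calc (C ((p:A)^(k+1)) * S).degree ≤ 0 + S.degree :=
                (degree_mul_le _ _).trans (add_le_add_left degree_C_le _)
          _ = S.degree := zero_add _
          _ < W.degree := degree_modByMonic_lt (E*v) hWm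
        · rw [hT, mul_add]
          apply Submodule.add_mem _ ((hT i W).mp hWT)
          have hXeq : C ((p:A)^i) * (C ((p:A)^(k+1)) * S) =
              (C ((p:A)^i) * m) * v - (C ((p:A)^i) * W) * (H * v)
                - (C ((p:A)^i) * W) * (C ((p:A)^(k+1)) * Q) := by
            simp only [C_pow] at hWH ⊢
            linear_combination ((C ((p:A)))^(i)*(C ((p:A)))^(k+1)) * hS
              - ((C ((p:A)))^i * v) * hWH
          rw [hXeq]
          apply Submodule.sub_mem
          apply Submodule.sub_mem
          · exact Itil.mul_mem_right v (Itil.mul_mem_left _ hmI)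
          · exact Itil.mul_mem_right _ ((hT i W).mp hWT)
          · exact Itil.mul_mem_right _ ((hT i W).mp hWT)
        · rw [Polynomial.map_add, hWmap, Polynomial.map_mul, map_C, map_pow, S9.phi_p,
            zero_pow (Nat.succ_ne_zero k), C_0, zero_mul, add_zero]
        · simp only [C_pow] at hWH ⊢
          linear_combination hWH - ((C ((p:A)))^(k+1)) * (E * huv + H * hS)
    obtain ⟨W, H, E, hWm, hWT, hWmap, hWH⟩ := main b
    have hz : m - W * H = 0 := by rw [hWH, hpa, C_0, zero_mul]
    exact ⟨W, hWm, hWT, hWmap, ⟨H, by linear_combination hz⟩⟩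
  choose F hFm hFT hFmap hFdvd using hF
  -- divisibility chain
  have hchain : ∀ i j : ℕ, i ≤ j → F j ∣ F i := by
    intro i j hij
    obtain ⟨Hi, hHi⟩ := hFdvd i
    obtain ⟨Hj, hHj⟩ := hFdvd j
    refine S9.dvd_of_red_dvd hn hpn (D1 := F j) (D2 := F i) (H1 := Hj) (H2 := Hi)
      hHj.symm hHi.symm ?_
    rw [hFmap i, hFmap j]
    exact hgchain i j hij
  refine ⟨fun i : Fin (b+1) => F (i : ℕ), fun i => hFm _, fun i => hFdvd _,
    fun i j hij => hchain _ _ hij, ?_⟩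
  -- the span equality
  apply le_antisymm
  · -- I ≤ span
    have claim : ∀ j i, b + 1 ≤ i + j → ∀ g ∈ T i,
        rmk p (b+1) n (C ((p:A)^i) * g) ∈ Ideal.span (Set.range fun i : Fin (b+1) =>
          rmk p (b+1) n (C ((p : A) ^ (i : ℕ)) * F (i : ℕ))) := by
      intro j
      induction j with
      | zero =>
        intro i hi g hg
        have h0 : ((p:A)^i) = 0 := by
          obtain ⟨c, rfl⟩ := Nat.exists_eq_add_of_le (show b+1 ≤ i by omega)
          rw [pow_add, hpa, zero_mul]
        rw [h0, C_0, zero_mul, map_zero]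
        exact Ideal.zero_mem _
      | succ j ihj =>
        intro i hi g hg
        by_cases hib : b + 1 ≤ i
        · have h0 : ((p:A)^i) = 0 := by
            obtain ⟨c, rfl⟩ := Nat.exists_eq_add_of_le hib
            rw [pow_add, hpa, zero_mul]
          rw [h0, C_0, zero_mul, map_zero]
          exact Ideal.zero_mem _
        · have hifin : i < b + 1 := by omega
          have hmem : g.map φ ∈ Kb i := hKbmem i g hg
          obtain ⟨cb, hcb⟩ := hgdvd i _ hmem
          obtain ⟨c, hc⟩ := hπsurj cb
          obtain ⟨v, hv⟩ := S9.ker_pi (g - F i * c) (by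
            rw [Polynomial.map_sub, Polynomial.map_mul, hFmap i, hc, hcb, sub_self])
          have hvT : v ∈ T (i+1) := by
            rw [hT]
            have he : C ((p:A)^(i+1)) * v = C ((p:A)^i) * g - (C ((p:A)^i) * F i) * c := by
              simp only [C_pow]
              linear_combination (-((C ((p:A)))^i)) * hv
            rw [he]
            exact Submodule.sub_mem _ ((hT i g).mp hg)
              (Itil.mul_mem_right c ((hT i (F i)).mp (hFT i)))
          have hIH := ihj (i+1) (by omega) v hvT
          have hsplitg : rmk p (b+1) n (C ((p:A)^i) * g) =
              rmk p (b+1) n (C ((p:A)^i) * F i) * rmk p (b+1) n c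
                + rmk p (b+1) n (C ((p:A)^(i+1)) * v) := by
            rw [← map_mul, ← map_add]
            congr 1
            simp only [C_pow]
            linear_combination ((C ((p:A)))^i) * hv
          rw [hsplitg]
          refine Ideal.add_mem _ (Ideal.mul_mem_right _ _ (Ideal.subset_span ?_)) hIH
          exact ⟨⟨i, hifin⟩, rfl⟩
    intro x hx
    obtain ⟨g, rfl⟩ := Ideal.Quotient.mk_surjective x
    have hg0 : g ∈ T 0 := by
      rw [hT]
      have : C ((p:A)^0) * g = g := by rw [pow_zero, C_1, one_mul]
      rw [this]
      exact hx
    have := claim (b+1) 0 (by omega) g hg0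
    have heq : C ((p:A)^0) * g = g := by rw [pow_zero, C_1, one_mul]
    rwa [heq] at this
  · -- span ≤ I
    rw [Ideal.span_le]
    rintro x ⟨i, rfl⟩
    exact (hT (i : ℕ) (F (i : ℕ))).mp (hFT (i : ℕ))
end
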